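/- arXiv:2009.05855 — 2 statements merged into one kernel-verified Lean document; each statement's English description precedes it below -/
import Mathlib

section
/- Let R be a left-Noetherian countable discrete ring with a proper norm, and let M be a Polish R-module. If M is uncountable, then there is a proper two-sided ideal I ◁ R and a continuous R-linear map ℓ¹(R) → M whose kernel is exactly ℓ¹(I) = ℓ¹(R) ∩ I^ℕ; in particular there is an injective R-linear map ℓ¹(R/I) → M. -/
theorem exists_seq_forall_cond {D : Type*} (d₀ : D) (C : ℕ → (ℕ → D) → Prop)
    (hdep : ∀ j (h h' : ℕ → D), (∀ i, i ≤ j → h i = h' i) → C j h → C j h')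
    (hstep : ∀ k (h : ℕ → D), (∀ j, j < k → C j h) →
      ∃ d : D, C k (fun i => if i = k then d else h i)) :
    ∃ g : ℕ → D, ∀ j, C j g := by
  classical
  let step : ∀ (k : ℕ), {h : ℕ → D // ∀ j, j < k → C j h} →
      {h : ℕ → D // ∀ j, j < k + 1 → C j h} := fun k ih =>
    ⟨fun i => if i = k then Classical.choose (hstep k ih.1 ih.2) else ih.1 i, by
      intro j hj
      rcases Nat.lt_succ_iff_lt_or_eq.mp hj with hj | rfl
      · refine hdep j ih.1 _ (fun i hi => ?_) (ih.2 j hj)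
        have : i ≠ k := by omega
        simp [this]
      · exact Classical.choose_spec (hstep j ih.1 ih.2)⟩
  let F : ∀ (k : ℕ), {h : ℕ → D // ∀ j, j < k → C j h} := fun k =>
    Nat.rec ⟨fun _ => d₀, fun j hj => absurd hj (Nat.not_lt_zero j)⟩ step k
  have hFsucc : ∀ k i, i ≠ k → (F (k + 1)).1 i = (F k).1 i := by
    intro k i h
    show (step k (F k)).1 i = (F k).1 i
    simp [step, h]
  have agree : ∀ k i, i < k → (F k).1 i = (F (i + 1)).1 i := by
    intro k
    induction k with
    | zero => omega
    | succ k ih =>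
      intro i hi
      rcases Nat.lt_succ_iff_lt_or_eq.mp hi with hi | rfl
      · rw [hFsucc k i (by omega)]; exact ih i hi
      · rfl
  refine ⟨fun i => (F (i + 1)).1 i, fun j => ?_⟩
  refine hdep j (F (j + 1)).1 _ (fun i hi => ?_) ((F (j + 1)).2 j (by omega))
  exact agree (j + 1) i (by omega)

/-- Membership in `ℓ¹(R)`: the series `Σ ν (x k) / k!` converges. -/
def MemL1 {R : Type*} (ν : R → ℝ) (x : ℕ → R) : Prop :=
  Summable fun k => ν (x k) / (Nat.factorial k : ℝ)

/-- The `ℓ¹` norm `Σ_k ν (x k) / k!`. -/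
noncomputable def l1Norm {R : Type*} (ν : R → ℝ) (x : ℕ → R) : ℝ :=
  ∑' k, ν (x k) / (Nat.factorial k : ℝ)

theorem stmt_16 (R : Type*) [Ring R] [Countable R] [IsNoetherianRing R]
    (ν : R → ℝ)
    -- ν is a proper norm on the countable discrete ring R (finite closed balls):
    (hnonneg : ∀ a, 0 ≤ ν a)
    (hzero : ∀ a, ν a = 0 ↔ a = 0)
    (hneg : ∀ a, ν (-a) = ν a)
    (hadd : ∀ a b, ν (a + b) ≤ ν a + ν b)
    (hmul : ∀ a b, ν (a * b) ≤ ν a * ν b)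
    (hproper : ∀ (a : R) (ε : ℝ), {b : R | ν (b - a) ≤ ε}.Finite)
    -- M is a Polish topological R-module (R discrete):
    (M : Type*) [AddCommGroup M] [Module R M] [TopologicalSpace M]
    [IsTopologicalAddGroup M] [ContinuousConstSMul R M] [PolishSpace M]
    -- which is uncountable:
    (huncount : ¬ Countable M) :
    -- then there is a proper two-sided ideal I and a continuous R-linear map
    -- ℓ¹(R) → M with kernel exactly ℓ¹(I):
    ∃ I : Ideal R, I ≠ ⊤ ∧ (∀ a ∈ I, ∀ r : R, a * r ∈ I) ∧
      ∃ f : {x : ℕ → R // MemL1 ν x} → M,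
        (∀ (x y : {x : ℕ → R // MemL1 ν x}) (h : MemL1 ν (x.1 + y.1)),
          f ⟨x.1 + y.1, h⟩ = f x + f y) ∧
        (∀ (r : R) (x : {x : ℕ → R // MemL1 ν x}) (h : MemL1 ν (r • x.1)),
          f ⟨r • x.1, h⟩ = r • f x) ∧
        (∀ x : {x : ℕ → R // MemL1 ν x}, ∀ U ∈ nhds (f x),
          ∃ δ > 0, ∀ y : {x : ℕ → R // MemL1 ν x},
            l1Norm ν (y.1 - x.1) < δ → f y ∈ U) ∧
        (∀ x : {x : ℕ → R // MemL1 ν x}, f x = 0 ↔ ∀ k, x.1 k ∈ I) := by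
  classical
  letI := TopologicalSpace.upgradeIsCompletelyMetrizable M
  -- a lower bound for the norm of nonzero ring elements
  obtain ⟨c, hc0, hc⟩ : ∃ c : ℝ, 0 < c ∧ ∀ r : R, ν r < c → r = 0 := by
    have hfin : {b : R | ν b ≤ 1}.Finite := by simpa using hproper 0 1
    set s : Finset R := (hfin.toFinset).filter (fun b => b ≠ 0) with hs
    by_cases hne : s.Nonempty
    · refine ⟨min 1 (s.inf' hne ν), lt_min one_pos ?_, ?_⟩
      · rw [Finset.lt_inf'_iff]
        intro b hb
        have hb0 : b ≠ 0 := (Finset.mem_filter.mp hb).2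
        rcases (hnonneg b).lt_or_eq with h | h
        · exact h
        · exact absurd ((hzero b).mp h.symm) hb0
      · intro r hr
        by_contra hr0
        have h1 : ν r ≤ 1 := le_of_lt (lt_of_lt_of_le hr (min_le_left _ _))
        have hmem : r ∈ s := by
          rw [hs, Finset.mem_filter]
          exact ⟨hfin.mem_toFinset.mpr h1, hr0⟩
        exact lt_irrefl _
          (lt_of_lt_of_le (lt_of_lt_of_le hr (min_le_right _ _)) (Finset.inf'_le ν hmem))
    · refine ⟨1, one_pos, fun r hr => ?_⟩
      by_contra hr0
      refine hne ⟨r, ?_⟩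
      rw [hs, Finset.mem_filter]
      exact ⟨hfin.mem_toFinset.mpr (le_of_lt hr), hr0⟩
  -- the "kernel" set of an ideal
  let SK : Ideal R → Set M := fun J => {m : M | ∀ a ∈ J, a • m = 0}
  let Fam : Ideal R → Prop := fun J => (∀ a ∈ J, ∀ r : R, a * r ∈ J) ∧ ¬ (SK J).Countable
  -- a maximal two-sided ideal with uncountable kernel set
  obtain ⟨I, hIFam, hImax⟩ : ∃ I, Fam I ∧ ∀ J, Fam J → I ≤ J → J = I := by
    have hbot : Fam ⊥ := by
      constructor
      · intro a ha r
        rw [Submodule.mem_bot] at ha ⊢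
        rw [ha, zero_mul]
      · have : SK ⊥ = Set.univ := by
          ext m
          simp only [SK, Set.mem_setOf_eq, Set.mem_univ, iff_true]
          intro a ha
          rw [Submodule.mem_bot] at ha
          rw [ha, zero_smul]
        rw [this, Set.countable_univ_iff]
        exact huncount
    obtain ⟨I, hI, hImax⟩ := (set_has_maximal_iff_noetherian.mpr
      (inferInstance : IsNoetherian R R)) {J : Submodule R R | Fam J} ⟨⊥, hbot⟩
    refine ⟨I, hI, fun J hJ hIJ => ?_⟩
    by_contra hne
    exact hImax J hJ (lt_of_le_of_ne hIJ (fun h => hne h.symm))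
  set Sset : Set M := SK I with hSsetdef
  have hS0 : (0 : M) ∈ Sset := fun a _ => smul_zero a
  have hS_add : ∀ {x y : M}, x ∈ Sset → y ∈ Sset → x + y ∈ Sset := by
    intro x y hx hy a ha
    rw [smul_add, hx a ha, hy a ha, add_zero]
  have hS_sub : ∀ {x y : M}, x ∈ Sset → y ∈ Sset → x - y ∈ Sset := by
    intro x y hx hy a ha
    rw [smul_sub, hx a ha, hy a ha, sub_zero]
  have hS_smul : ∀ (r : R) {x : M}, x ∈ Sset → r • x ∈ Sset := by
    intro r x hx a ha
    rw [← mul_smul]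
    exact hx _ (hIFam.1 a ha r)
  have hS_closed : IsClosed Sset := by
    have : Sset = ⋂ a : I, {m : M | (a : R) • m = 0} := by
      ext m; simp only [Set.mem_iInter, Set.mem_setOf_eq]
      exact ⟨fun h a => h a a.2, fun h a ha => h ⟨a, ha⟩⟩
    rw [this]
    exact isClosed_iInter fun a =>
      isClosed_eq (continuous_const_smul (a : R)) continuous_const
  have hS_unc : ¬ Sset.Countable := hIFam.2
  haveI : CompleteSpace Sset := hS_closed.completeSpace_coe
  obtain ⟨Dd, hDc, hDd⟩ := TopologicalSpace.exists_countable_dense ↥Sset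
  -- every open neighbourhood of 0 meets Sset in an uncountable set
  have open_unc : ∀ U : Set M, IsOpen U → (0 : M) ∈ U → ¬ (U ∩ Sset).Countable := by
    intro U hU h0U hcnt
    refine hS_unc (Set.Countable.mono ?_
      (Set.Countable.biUnion hDc (fun d _ => hcnt.image (fun u : M => (d : M) - u))))
    intro x hx
    have hWopen : IsOpen ((fun y : ↥Sset => (y : M) - x) ⁻¹' U) :=
      hU.preimage (continuous_subtype_val.sub continuous_const)
    have hxW : (⟨x, hx⟩ : ↥Sset) ∈ (fun y : ↥Sset => (y : M) - x) ⁻¹' U := by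
      simp only [Set.mem_preimage, sub_self]
      exact h0U
    obtain ⟨d, hdW, hdD⟩ := hDd.inter_open_nonempty _ hWopen ⟨_, hxW⟩
    refine Set.mem_biUnion hdD ⟨(d : M) - x, ⟨hdW, hS_sub d.2 hx⟩, ?_⟩
    simp
  -- for r ∉ I the image r • Sset is uncountable
  have SC : ∀ a : R, ((fun m : M => a • m) '' Sset).Countable →
      ∃ U : Set M, IsOpen U ∧ (0 : M) ∈ U ∧ ∀ m ∈ U ∩ Sset, a • m = 0 := by
    intro a hac
    have hfib : ∃ c0 : M, (interior {mm : ↥Sset | a • (mm : M) = c0}).Nonempty := by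
      by_contra hno
      push_neg at hno
      haveI : Countable ↥((fun m : M => a • m) '' Sset) := hac.to_subtype
      have hdense : Dense (⋂ cc : ↥((fun m : M => a • m) '' Sset),
          {mm : ↥Sset | a • (mm : M) = (cc : M)}ᶜ) := by
        apply dense_iInter_of_isOpen
        · intro cc
          exact (isClosed_eq ((continuous_subtype_val).const_smul a)
            continuous_const).isOpen_compl
        · intro cc
          rw [← interior_eq_empty_iff_dense_compl]
          exact hno _
      haveI : Nonempty ↥Sset := ⟨⟨0, hS0⟩⟩
      obtain ⟨mm, hmm⟩ := hdense.nonempty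
      rw [Set.mem_iInter] at hmm
      exact (hmm ⟨a • (mm : M), ⟨(mm : M), mm.2, rfl⟩⟩) rfl
    obtain ⟨c0, mm₀, hmm₀⟩ := hfib
    obtain ⟨O, hOopen, hOpre⟩ :=
      isOpen_induced_iff.mp (isOpen_interior (s := {mm : ↥Sset | a • (mm : M) = c0}))
    have hm₀O : (mm₀ : M) ∈ O := by
      rw [← Set.mem_preimage (f := (Subtype.val : ↥Sset → M)), hOpre]
      exact hmm₀
    have hm₀fib : a • (mm₀ : M) = c0 :=
      interior_subset (s := {mm : ↥Sset | a • (mm : M) = c0}) hmm₀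
    refine ⟨(fun u : M => u + (mm₀ : M)) ⁻¹' O,
      hOopen.preimage (continuous_id.add continuous_const), ?_, ?_⟩
    · simp only [Set.mem_preimage, zero_add]
      exact hm₀O
    · intro m hm
      have hmem : m + (mm₀ : M) ∈ Sset := hS_add hm.2 mm₀.2
      have hOmem : (⟨m + (mm₀ : M), hmem⟩ : ↥Sset) ∈
          (Subtype.val : ↥Sset → M) ⁻¹' O := hm.1
      rw [hOpre] at hOmem
      have h2 : a • (m + (mm₀ : M)) = c0 :=
        interior_subset (s := {mm : ↥Sset | a • (mm : M) = c0}) hOmem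
      rw [smul_add, hm₀fib] at h2
      exact add_eq_right.mp h2
  have image_unc : ∀ r : R, r ∉ I → ¬ ((fun m : M => r • m) '' Sset).Countable := by
    intro r hrI hcnt
    let Timg : Submodule R R :=
      { carrier := {s : R | ((fun m : M => s • m) '' Sset).Countable}
        add_mem' := by
          intro s t hs ht
          refine Set.Countable.mono ?_ (Set.Countable.image2 hs ht (· + ·))
          rintro z ⟨m, hm, rfl⟩
          exact ⟨s • m, ⟨m, hm, rfl⟩, t • m, ⟨m, hm, rfl⟩, (add_smul s t m).symm⟩
        zero_mem' := by
          refine Set.Countable.mono ?_ (Set.countable_singleton (0 : M))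
          rintro z ⟨m, hm, rfl⟩
          simp
        smul_mem' := by
          intro t s hs
          refine Set.Countable.mono ?_ (hs.image (fun y : M => t • y))
          rintro z ⟨m, hm, rfl⟩
          exact ⟨s • m, ⟨m, hm, rfl⟩, (mul_smul t s m).symm⟩ }
    have hT2 : ∀ a ∈ Timg, ∀ t : R, a * t ∈ Timg := by
      intro a ha t
      refine Set.Countable.mono ?_ ha
      rintro z ⟨m, hm, rfl⟩
      exact ⟨t • m, hS_smul t hm, (mul_smul a t m).symm⟩
    have hIT : I ≤ Timg := by
      intro a ha
      refine Set.Countable.mono ?_ (Set.countable_singleton (0 : M))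
      rintro z ⟨m, hm, rfl⟩
      simp only [Set.mem_singleton_iff]
      exact hm a ha
    obtain ⟨sgen, hsgen⟩ := IsNoetherian.noetherian Timg
    choose Ua hUaopen hUa0 hUaker using fun a : R => fun h : a ∈ Timg => SC a h
    have hgen_mem : ∀ a ∈ sgen, a ∈ Timg := by
      intro a ha
      rw [← hsgen]
      exact Submodule.subset_span ha
    set U : Set M := ⋂ a ∈ sgen, ⋂ h : a ∈ Timg, Ua a h with hUdef
    have hUopen : IsOpen U := by
      refine Set.Finite.isOpen_biInter sgen.finite_toSet (fun a ha => ?_)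
      exact isOpen_iInter_of_finite (fun h => hUaopen a h)
    have hU0 : (0 : M) ∈ U := by
      simp only [hUdef, Set.mem_iInter]
      intro a ha h
      exact hUa0 a h
    have hUker : U ∩ Sset ⊆ SK Timg := by
      rintro m ⟨hmU, hmS⟩ b hb
      rw [← hsgen] at hb
      induction hb using Submodule.span_induction with
      | mem x h =>
        have := hgen_mem x h
        simp only [hUdef, Set.mem_iInter] at hmU
        exact hUaker x this m ⟨hmU x h this, hmS⟩
      | zero => exact zero_smul R m
      | add x y hx hy hpx hpy => rw [add_smul, hpx, hpy, add_zero]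
      | smul t x hx hpx => rw [smul_eq_mul, mul_smul, hpx, smul_zero]
    have hFamT : Fam Timg := by
      refine ⟨hT2, fun hcT => ?_⟩
      exact open_unc U hUopen hU0 (hcT.mono hUker)
    have := hImax Timg hFamT hIT
    rw [← this] at hrI
    exact hrI hcnt
  -- fibers of r • · on Sset contain no relatively open set
  have fiber_small : ∀ r : R, r ∉ I → ∀ c0 : M, ∀ O : Set M, IsOpen O →
      (O ∩ Sset).Nonempty → ∃ m ∈ O ∩ Sset, r • m ≠ c0 := by
    intro r hrI c0 O hOopen hOne
    by_contra hno
    push_neg at hno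
    obtain ⟨m₀, hm₀⟩ := hOne
    have hm₀c : r • m₀ = c0 := hno m₀ hm₀
    have hker : ∀ u, u ∈ ((fun u : M => u + m₀) ⁻¹' O) ∩ Sset → r • u = 0 := by
      intro u hu
      have hmem : u + m₀ ∈ Sset := hS_add hu.2 hm₀.2
      have h2 : r • (u + m₀) = c0 := hno _ ⟨hu.1, hmem⟩
      rw [smul_add, hm₀c] at h2
      exact add_eq_right.mp h2
    refine image_unc r hrI (Set.Countable.mono ?_
      ((hDc.image (fun d : ↥Sset => r • (d : M)))))
    rintro z ⟨x, hx, rfl⟩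
    have hWopen : IsOpen ((fun y : ↥Sset => (y : M) - x) ⁻¹'
        ((fun u : M => u + m₀) ⁻¹' O)) :=
      (hOopen.preimage (continuous_id.add continuous_const)).preimage
        (continuous_subtype_val.sub continuous_const)
    have hxW : (⟨x, hx⟩ : ↥Sset) ∈ (fun y : ↥Sset => (y : M) - x) ⁻¹'
        ((fun u : M => u + m₀) ⁻¹' O) := by
      simp only [Set.mem_preimage, sub_self, zero_add]
      exact hm₀.1
    obtain ⟨d, hdW, hdD⟩ := hDd.inter_open_nonempty _ hWopen ⟨_, hxW⟩
    have hzero : r • ((d : M) - x) = 0 := hker _ ⟨hdW, hS_sub d.2 hx⟩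
    rw [smul_sub, sub_eq_zero] at hzero
    exact ⟨d, hdD, hzero⟩
  -- the fusion recursion
  let Cond : ℕ → (ℕ → Set M × M) → Prop := fun j h =>
    IsOpen (h j).1 ∧
    (0 : M) ∈ (h j).1 ∧
    (∀ a ∈ (h j).1, ∀ b ∈ (h j).1, a + b ∈ Metric.ball (0 : M) ((1/2 : ℝ)^j)) ∧
    (j ≠ 0 → ∀ a ∈ (h j).1, ∀ b ∈ (h j).1, a + b ∈ (h (j-1)).1) ∧
    (h j).2 ∈ Sset ∧
    (∀ r : R, ν r ≤ (j : ℝ) * (Nat.factorial j : ℝ) → r • (h j).2 ∈ (h j).1) ∧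
    (∀ r : R, r ∉ I → ∀ x : ℕ → R,
      r • (h j).2 + (∑ i ∈ Finset.range j, x i • (h i).2) ≠ 0) ∧
    (∀ x : ℕ → R, (∀ i, i < j → ν (x i) ≤ (j : ℝ) * (Nat.factorial i : ℝ)) →
      (∃ i, i < j ∧ x i ∉ I) →
      -(∑ i ∈ Finset.range j, x i • (h i).2) ∉
        closure {z : M | ∃ a ∈ (h j).1, ∃ b ∈ (h j).1, z = a + b}) ∧
    (∀ y : ℕ → R, (∀ i, i < j → ν (y i) ≤ (j : ℝ) * (Nat.factorial i : ℝ)) →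
      ∀ r : R, ν r ≤ (j : ℝ) * (Nat.factorial j : ℝ) →
      dist ((∑ i ∈ Finset.range j, y i • (h i).2) + r • (h j).2)
        (∑ i ∈ Finset.range j, y i • (h i).2) ≤ (1/2 : ℝ)^j)
  have hdep : ∀ j (h h' : ℕ → Set M × M), (∀ i, i ≤ j → h i = h' i) →
      Cond j h → Cond j h' := by
    intro j h h' he hC
    have e1 : h' j = h j := (he j le_rfl).symm
    have e2 : h' (j-1) = h (j-1) := (he (j-1) (Nat.sub_le j 1)).symm
    have hsum : ∀ x : ℕ → R, (∑ i ∈ Finset.range j, x i • (h' i).2) =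
        ∑ i ∈ Finset.range j, x i • (h i).2 := by
      intro x
      refine Finset.sum_congr rfl (fun i hi => ?_)
      rw [he i (le_of_lt (Finset.mem_range.mp hi))]
    obtain ⟨c1, c2, c3, c4, c5, c6, c7, c8, c9⟩ := hC
    refine ⟨?_, ?_, ?_, ?_, ?_, ?_, ?_, ?_, ?_⟩
    · rw [e1]; exact c1
    · rw [e1]; exact c2
    · rw [e1]; exact c3
    · rw [e1, e2]; exact c4
    · rw [e1]; exact c5
    · rw [e1]; exact c6
    · simp only [e1, hsum]; exact c7
    · simp only [e1, hsum]; exact c8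
    · simp only [e1, hsum]; exact c9
  have hstep : ∀ k (h : ℕ → Set M × M), (∀ j, j < k → Cond j h) →
      ∃ d : Set M × M, Cond k (fun i => if i = k then d else h i) := by
    intro k h hprev
    have hmemS : ∀ j, j < k → (h j).2 ∈ Sset := fun j hj => (hprev j hj).2.2.2.2.1
    have hsmul0 : ∀ j, j < k → ∀ a ∈ I, a • (h j).2 = 0 :=
      fun j hj a ha => hmemS j hj a ha
    have star : ∀ j, j ≤ k → ∀ x : ℕ → R, (∃ i, i < j ∧ x i ∉ I) →
        (∑ i ∈ Finset.range j, x i • (h i).2) ≠ 0 := by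
      intro j
      induction j with
      | zero => rintro _ x ⟨i, hi, _⟩; omega
      | succ j ih =>
        intro hj x hex
        rw [Finset.sum_range_succ]
        by_cases hxj : x j ∈ I
        · have hz : x j • (h j).2 = 0 := hsmul0 j (by omega) _ hxj
          rw [hz, add_zero]
          obtain ⟨i, hi, hiI⟩ := hex
          have hij : i < j := by
            rcases Nat.lt_succ_iff_lt_or_eq.mp hi with hh | rfl
            · exact hh
            · exact absurd hxj hiI
          exact ih (by omega) x ⟨i, hij, hiI⟩
        · have h6 := (hprev j (by omega)).2.2.2.2.2.2.1 (x j) hxj x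
          rw [add_comm] at h6
          exact h6
    have hball : ∀ (B : ℝ), {r : R | ν r ≤ B}.Finite := by
      intro B; simpa using hproper 0 B
    have hfinsums : ∀ (bnd : ℕ → ℝ),
        {z : M | ∃ v : Fin k → R, (∀ i : Fin k, ν (v i) ≤ bnd i.1) ∧
          z = ∑ i : Fin k, v i • (h i.1).2}.Finite := by
      intro bnd
      have hdom : {v : Fin k → R | ∀ i : Fin k, ν (v i) ≤ bnd i.1}.Finite := by
        refine (Set.Finite.pi (fun i : Fin k => hball (bnd i.1))).subset ?_
        intro v hv
        rw [Set.mem_pi]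
        intro i _
        exact hv i
      refine (hdom.image (fun v => ∑ i : Fin k, v i • (h i.1).2)).subset ?_
      rintro z ⟨v, hv, rfl⟩
      exact ⟨v, hv, rfl⟩
    set PP : Set M := {z : M | ∃ v : Fin k → R,
      (∀ i : Fin k, ν (v i) ≤ (k : ℝ) * (Nat.factorial i.1 : ℝ)) ∧ (∃ i, v i ∉ I) ∧
      z = ∑ i : Fin k, v i • (h i.1).2} with hPPdef
    have hPPfin : PP.Finite := (hfinsums (fun n => (k : ℝ) * (Nat.factorial n : ℝ))).subset (by
      rintro z ⟨v, hv, _, hz⟩; exact ⟨v, hv, hz⟩)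
    have hPP0 : ∀ z ∈ PP, z ≠ 0 := by
      rintro z ⟨v, hv, ⟨i0, hi0⟩, rfl⟩
      set x : ℕ → R := fun n => if hn : n < k then v ⟨n, hn⟩ else 0 with hxdef
      have hxe : (∑ i : Fin k, v i • (h i.1).2) = ∑ i ∈ Finset.range k, x i • (h i).2 := by
        rw [← Fin.sum_univ_eq_sum_range (fun n => x n • (h n).2) k]
        refine Finset.sum_congr rfl (fun i _ => ?_)
        simp [hxdef, i.2]
      rw [hxe]
      refine star k le_rfl x ⟨i0.1, i0.2, ?_⟩
      simpa [hxdef, i0.2] using hi0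
    have hQfin : ((fun p : M => -p) '' PP).Finite := hPPfin.image _
    have hQ0 : (0 : M) ∉ (fun p : M => -p) '' PP := by
      rintro ⟨p, hp, hp0⟩
      exact hPP0 p hp (by simpa [neg_eq_zero] using hp0)
    obtain ⟨ε, hε0, hεball⟩ : ∃ ε > 0, Metric.ball (0 : M) ε ⊆ ((fun p : M => -p) '' PP)ᶜ := by
      have hmem : ((fun p : M => -p) '' PP)ᶜ ∈ nhds (0 : M) :=
        (hQfin.isClosed.isOpen_compl).mem_nhds hQ0
      rcases Metric.mem_nhds_iff.mp hmem with ⟨ε, hε0, hsub⟩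
      exact ⟨ε, hε0, hsub⟩
    set ρ := min ((1/2 : ℝ)^k) (ε/2) with hρdef
    have hρ0 : 0 < ρ := lt_min (by positivity) (by positivity)
    obtain ⟨Tg, hTgopen, hTg0, hTgball, hTgprev⟩ : ∃ Tg : Set M, IsOpen Tg ∧ (0 : M) ∈ Tg ∧
        Tg ⊆ Metric.ball (0 : M) ρ ∧ (k ≠ 0 → Tg ⊆ (h (k-1)).1) := by
      by_cases hk0 : k = 0
      · exact ⟨Metric.ball 0 ρ, Metric.isOpen_ball, Metric.mem_ball_self hρ0,
          le_refl _, fun hcon => absurd hk0 hcon⟩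
      · exact ⟨Metric.ball 0 ρ ∩ (h (k-1)).1,
          Metric.isOpen_ball.inter (hprev (k-1) (by omega)).1,
          ⟨Metric.mem_ball_self hρ0, (hprev (k-1) (by omega)).2.1⟩,
          Set.inter_subset_left, fun _ => Set.inter_subset_right⟩
    obtain ⟨W, hWopen, hW0, hWadd⟩ := exists_open_nhds_zero_half (hTgopen.mem_nhds hTg0)
    set A : Set R := {r : R | ν r ≤ (k : ℝ) * (Nat.factorial k : ℝ)} with hAdef
    have hA : A.Finite := hball _
    set SS : Set M := {z : M | ∃ v : Fin k → R,
        (∀ i : Fin k, ν (v i) ≤ (k : ℝ) * (Nat.factorial i.1 : ℝ)) ∧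
        z = ∑ i : Fin k, v i • (h i.1).2} with hSSdef
    have hSSfin : SS.Finite := hfinsums (fun n => (k : ℝ) * (Nat.factorial n : ℝ))
    set O₁ : Set M := ⋂ r ∈ A, (fun m : M => r • m) ⁻¹' W with hO₁
    have hO₁open : IsOpen O₁ :=
      hA.isOpen_biInter (fun r _ => hWopen.preimage (continuous_const_smul r))
    have hO₁0 : (0 : M) ∈ O₁ := by
      simp only [hO₁, Set.mem_iInter, Set.mem_preimage]
      intro r _
      rw [smul_zero]
      exact hW0
    set O₂ : Set M := ⋂ s ∈ SS, ⋂ r ∈ A, {m : M | dist (s + r • m) s < (1/2 : ℝ)^k} with hO₂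
    have hO₂open : IsOpen O₂ := hSSfin.isOpen_biInter fun s _ => hA.isOpen_biInter fun r _ =>
      isOpen_lt ((continuous_const.add (continuous_const_smul r)).dist continuous_const)
        continuous_const
    have hO₂0 : (0 : M) ∈ O₂ := by
      simp only [hO₂, Set.mem_iInter, Set.mem_setOf_eq]
      intro s _ r _
      rw [smul_zero, add_zero, dist_self]
      positivity
    set Hs : Set M := Set.range (fun v : Fin k → R => ∑ i : Fin k, v i • (h i.1).2) with hHs
    have hHsc : Hs.Countable := Set.countable_range _
    haveI := hHsc.to_subtype
    have hGopen : ∀ p : {r : R // r ∉ I} × ↥Hs,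
        IsOpen {mm : ↥Sset | (p.1 : R) • (mm : M) + (p.2 : M) ≠ 0} :=
      fun p => (isClosed_eq ((continuous_subtype_val.const_smul (p.1 : R)).add
        continuous_const) continuous_const).isOpen_compl
    have hGdense : ∀ p : {r : R // r ∉ I} × ↥Hs,
        Dense {mm : ↥Sset | (p.1 : R) • (mm : M) + (p.2 : M) ≠ 0} := by
      intro p
      rw [dense_iff_inter_open]
      rintro U hUopen ⟨u0, hu0⟩
      obtain ⟨O, hOopen, hOpre⟩ := isOpen_induced_iff.mp hUopen
      have hOne : (O ∩ Sset).Nonempty := by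
        refine ⟨(u0 : M), ?_, u0.2⟩
        rw [← hOpre] at hu0
        exact hu0
      obtain ⟨m, hmO, hmne⟩ := fiber_small p.1.1 p.1.2 (-(p.2 : M)) O hOopen hOne
      refine ⟨⟨m, hmO.2⟩, ?_, ?_⟩
      · rw [← hOpre]
        exact hmO.1
      · simp only [Set.mem_setOf_eq]
        intro heq
        exact hmne (by rwa [add_eq_zero_iff_eq_neg] at heq)
    have hdense2 : Dense (⋂ p : {r : R // r ∉ I} × ↥Hs,
        {mm : ↥Sset | (p.1 : R) • (mm : M) + (p.2 : M) ≠ 0}) :=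
      dense_iInter_of_isOpen hGopen hGdense
    have hOOopen : IsOpen ((Subtype.val : ↥Sset → M) ⁻¹' (O₁ ∩ O₂)) :=
      (hO₁open.inter hO₂open).preimage continuous_subtype_val
    obtain ⟨mk, hmkOO, hmkG⟩ := hdense2.inter_open_nonempty _ hOOopen
      ⟨⟨0, hS0⟩, by exact ⟨hO₁0, hO₂0⟩⟩
    refine ⟨(W, (mk : M)), ?_⟩
    set d : Set M × M := (W, (mk : M)) with hd
    show Cond k (fun i => if i = k then d else h i)
    set h' : ℕ → Set M × M := fun i => if i = k then d else h i with hh'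
    have hk' : h' k = d := by simp [hh']
    have hlt : ∀ i, i < k → h' i = h i := by
      intro i hi
      simp [hh', Nat.ne_of_lt hi]
    have hsum' : ∀ x : ℕ → R, (∑ i ∈ Finset.range k, x i • (h' i).2) =
        ∑ i ∈ Finset.range k, x i • (h i).2 :=
      fun x => Finset.sum_congr rfl (fun i hi => by rw [hlt i (Finset.mem_range.mp hi)])
    have hWTg : ∀ a ∈ W, ∀ b ∈ W, a + b ∈ Tg := hWadd
    refine ⟨?_, ?_, ?_, ?_, ?_, ?_, ?_, ?_, ?_⟩
    · rw [hk']; exact hWopen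
    · rw [hk']; exact hW0
    · rw [hk']
      intro a ha b hb
      exact Metric.ball_subset_ball (min_le_left _ _) (hTgball (hWTg a ha b hb))
    · intro hk0
      rw [hk', hlt (k-1) (by omega)]
      intro a ha b hb
      exact hTgprev hk0 (hWTg a ha b hb)
    · rw [hk']; exact mk.2
    · rw [hk']
      intro r hr
      have := hmkOO.1
      rw [hO₁, Set.mem_iInter₂] at this
      exact this r hr
    · simp only [hk', hsum']
      intro r hrI x
      have hp : (∑ i ∈ Finset.range k, x i • (h i).2) ∈ Hs := by
        rw [hHs]
        refine ⟨fun i : Fin k => x i.1, ?_⟩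
        exact Fin.sum_univ_eq_sum_range (fun n => x n • (h n).2) k
      have := Set.mem_iInter.mp hmkG ⟨⟨r, hrI⟩, ⟨_, hp⟩⟩
      exact this
    · simp only [hk', hsum']
      intro x hb hex hmem
      have hPPmem : (∑ i ∈ Finset.range k, x i • (h i).2) ∈ PP := by
        rw [hPPdef]
        refine ⟨fun i : Fin k => x i.1, fun i => hb i.1 i.2, ?_, ?_⟩
        · obtain ⟨i, hi, hiI⟩ := hex
          exact ⟨⟨i, hi⟩, hiI⟩
        · exact (Fin.sum_univ_eq_sum_range (fun n => x n • (h n).2) k).symm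
      have hsub : {z : M | ∃ a ∈ W, ∃ b ∈ W, z = a + b} ⊆ Metric.ball (0 : M) ρ := by
        rintro z ⟨a, ha, b, hb', rfl⟩
        exact hTgball (hWTg a ha b hb')
      have hclsub : closure {z : M | ∃ a ∈ W, ∃ b ∈ W, z = a + b} ⊆
          Metric.closedBall (0 : M) ρ :=
        (closure_mono hsub).trans Metric.closure_ball_subset_closedBall
      have hin : -(∑ i ∈ Finset.range k, x i • (h i).2) ∈ Metric.ball (0 : M) ε :=
        Metric.closedBall_subset_ball
          (lt_of_le_of_lt (min_le_right _ _) (by linarith)) (hclsub hmem)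
      exact hεball hin ⟨_, hPPmem, rfl⟩
    · simp only [hk', hsum']
      intro y hb r hr
      have hs : (∑ i ∈ Finset.range k, y i • (h i).2) ∈ SS := by
        rw [hSSdef]
        refine ⟨fun i : Fin k => y i.1, fun i => hb i.1 i.2, ?_⟩
        exact (Fin.sum_univ_eq_sum_range (fun n => y n • (h n).2) k).symm
      have := hmkOO.2
      rw [hO₂, Set.mem_iInter₂] at this
      have h2 := this _ hs
      rw [Set.mem_iInter₂] at h2
      exact le_of_lt (h2 r hr)
  obtain ⟨g, hg⟩ := exists_seq_forall_cond (∅, (0 : M)) Cond hdep hstep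
  set V : ℕ → Set M := fun i => (g i).1 with hVdef
  set mv : ℕ → M := fun i => (g i).2 with hmvdef
  have hC0 : ∀ j, (0 : M) ∈ V j := fun j => (hg j).2.1
  have hCball : ∀ j, ∀ a ∈ V j, ∀ b ∈ V j, a + b ∈ Metric.ball (0 : M) ((1/2 : ℝ)^j) :=
    fun j => (hg j).2.2.1
  have hCprev : ∀ j, j ≠ 0 → ∀ a ∈ V j, ∀ b ∈ V j, a + b ∈ V (j-1) :=
    fun j => (hg j).2.2.2.1
  have hCS : ∀ j, mv j ∈ Sset := fun j => (hg j).2.2.2.2.1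
  have hC5 : ∀ j : ℕ, ∀ r : R, ν r ≤ (j : ℝ) * (Nat.factorial j : ℝ) → r • mv j ∈ V j :=
    fun j => (hg j).2.2.2.2.2.1
  have hC4 : ∀ j : ℕ, ∀ x : ℕ → R, (∀ i, i < j → ν (x i) ≤ (j : ℝ) * (Nat.factorial i : ℝ)) →
      (∃ i, i < j ∧ x i ∉ I) →
      -(∑ i ∈ Finset.range j, x i • mv i) ∉
        closure {z : M | ∃ a ∈ V j, ∃ b ∈ V j, z = a + b} :=
    fun j => (hg j).2.2.2.2.2.2.2.1
  have hC7 : ∀ j : ℕ, ∀ y : ℕ → R, (∀ i, i < j → ν (y i) ≤ (j : ℝ) * (Nat.factorial i : ℝ)) →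
      ∀ r : R, ν r ≤ (j : ℝ) * (Nat.factorial j : ℝ) →
      dist ((∑ i ∈ Finset.range j, y i • mv i) + r • mv j)
        (∑ i ∈ Finset.range j, y i • mv i) ≤ (1/2 : ℝ)^j :=
    fun j => (hg j).2.2.2.2.2.2.2.2
  -- bound on coefficients of an ℓ¹ sequence
  have hfactpos : ∀ i : ℕ, (0 : ℝ) < (Nat.factorial i : ℝ) := by
    intro i
    exact_mod_cast Nat.factorial_pos i
  have hlvl : ∀ z : ℕ → R, MemL1 ν z → ∀ kk : ℕ,
      ν (z kk) ≤ ((⌈l1Norm ν z⌉₊ + 1 : ℕ) : ℝ) * (Nat.factorial kk : ℝ) := by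
    intro z hz kk
    have h1 : ν (z kk) / (Nat.factorial kk : ℝ) ≤ l1Norm ν z :=
      Summable.le_tsum hz kk (fun j _ => div_nonneg (hnonneg _) (hfactpos j).le)
    have h3 : ν (z kk) ≤ l1Norm ν z * (Nat.factorial kk : ℝ) := by
      rw [div_le_iff₀ (hfactpos kk)] at h1
      exact h1
    refine h3.trans (mul_le_mul_of_nonneg_right ?_ (hfactpos kk).le)
    push_cast
    exact (Nat.le_ceil _).trans (by linarith)
  -- convergence of the partial sums
  have conv : ∀ z : ℕ → R, MemL1 ν z → ∃ L : M,
      Filter.Tendsto (fun J => ∑ i ∈ Finset.range J, z i • mv i) Filter.atTop (nhds L) := by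
    intro z hz
    set N := ⌈l1Norm ν z⌉₊ + 1 with hN
    have hbndN : ∀ i, ν (z i) ≤ (N : ℝ) * (Nat.factorial i : ℝ) := by
      intro i
      exact_mod_cast hlvl z hz i
    have hstep' : ∀ n : ℕ, dist (∑ i ∈ Finset.range (N + n), z i • mv i)
        (∑ i ∈ Finset.range (N + n + 1), z i • mv i) ≤ (1/2 : ℝ)^N * (1/2 : ℝ)^n := by
      intro n
      rw [Finset.sum_range_succ, dist_comm, ← pow_add]
      refine hC7 (N + n) z (fun i hi => ?_) (z (N + n)) ?_
      · exact (hbndN i).trans (mul_le_mul_of_nonneg_right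
          (Nat.cast_le.mpr (by omega)) (hfactpos i).le)
      · exact (hbndN (N + n)).trans (mul_le_mul_of_nonneg_right
          (Nat.cast_le.mpr (by omega)) (hfactpos (N + n)).le)
    have hcauchy : CauchySeq (fun n => ∑ i ∈ Finset.range (N + n), z i • mv i) :=
      cauchySeq_of_le_geometric (1/2) ((1/2 : ℝ)^N) (by norm_num) hstep'
    obtain ⟨L, hL⟩ := cauchySeq_tendsto_of_complete hcauchy
    refine ⟨L, ?_⟩
    rw [← Filter.tendsto_add_atTop_iff_nat N]
    have heq : (fun J => ∑ i ∈ Finset.range (J + N), z i • mv i) =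
        (fun n => ∑ i ∈ Finset.range (N + n), z i • mv i) := by
      funext n
      rw [Nat.add_comm]
    rw [heq]
    exact hL
  set f : {x : ℕ → R // MemL1 ν x} → M := fun z => Classical.choose (conv z.1 z.2) with hfdef
  have hf : ∀ z : {x : ℕ → R // MemL1 ν x},
      Filter.Tendsto (fun J => ∑ i ∈ Finset.range J, z.1 i • mv i) Filter.atTop (nhds (f z)) :=
    fun z => Classical.choose_spec (conv z.1 z.2)
  -- sums of tail terms lie in V m0 + V m0
  have sumv : ∀ (w : ℕ → R) (len m0 : ℕ), 1 ≤ m0 →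
      (∀ i, m0 ≤ i → i < m0 + len → w i • mv i ∈ V i) →
      ∃ a ∈ V m0, ∃ b ∈ V m0, (∑ i ∈ Finset.Ico m0 (m0 + len), w i • mv i) = a + b := by
    intro w len
    induction len with
    | zero =>
      intro m0 hm0 _
      refine ⟨0, hC0 m0, 0, hC0 m0, ?_⟩
      simp
    | succ len ih =>
      intro m0 hm0 hmem
      have heq : m0 + (len + 1) = (m0 + 1) + len := by omega
      rw [heq, Finset.sum_eq_sum_Ico_succ_bot (by omega : m0 < (m0 + 1) + len)]
      obtain ⟨a, ha, b, hb, hab⟩ := ih (m0 + 1) (by omega)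
        (fun i h1 h2 => hmem i (by omega) (by omega))
      refine ⟨w m0 • mv m0, hmem m0 le_rfl (by omega), a + b, ?_, ?_⟩
      · have := hCprev (m0 + 1) (by omega) a ha b hb
        simpa using this
      · rw [hab]
  -- additivity
  have hAdd : ∀ (x y : {x : ℕ → R // MemL1 ν x}) (h : MemL1 ν (x.1 + y.1)),
      f ⟨x.1 + y.1, h⟩ = f x + f y := by
    intro x y h
    refine tendsto_nhds_unique (hf ⟨x.1 + y.1, h⟩) ?_
    have heq : (fun J => ∑ i ∈ Finset.range J, (x.1 + y.1) i • mv i) =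
        (fun J => (∑ i ∈ Finset.range J, x.1 i • mv i) +
          ∑ i ∈ Finset.range J, y.1 i • mv i) := by
      funext J
      rw [← Finset.sum_add_distrib]
      refine Finset.sum_congr rfl (fun i _ => ?_)
      rw [Pi.add_apply, add_smul]
    rw [heq]
    exact (hf x).add (hf y)
  -- homogeneity
  have hSmul : ∀ (r : R) (x : {x : ℕ → R // MemL1 ν x}) (h : MemL1 ν (r • x.1)),
      f ⟨r • x.1, h⟩ = r • f x := by
    intro r x h
    refine tendsto_nhds_unique (hf ⟨r • x.1, h⟩) ?_
    have heq : (fun J => ∑ i ∈ Finset.range J, (r • x.1) i • mv i) =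
        (fun J => r • ∑ i ∈ Finset.range J, x.1 i • mv i) := by
      funext J
      rw [Finset.smul_sum]
      refine Finset.sum_congr rfl (fun i _ => ?_)
      rw [Pi.smul_apply, smul_eq_mul, mul_smul]
    rw [heq]
    exact (hf x).const_smul r
  -- the kernel property
  have hKer : ∀ x : {x : ℕ → R // MemL1 ν x}, f x = 0 ↔ ∀ k, x.1 k ∈ I := by
    intro x
    constructor
    · intro hfx
      by_contra hnall
      push_neg at hnall
      obtain ⟨j₀, hj₀⟩ := hnall
      set N := max (⌈l1Norm ν x.1⌉₊ + 1) (j₀ + 1) with hNdef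
      have hN1 : 1 ≤ N := by omega
      have hbnd : ∀ i, ν (x.1 i) ≤ (N : ℝ) * (Nat.factorial i : ℝ) := by
        intro i
        refine (hlvl x.1 x.2 i).trans (mul_le_mul_of_nonneg_right ?_ (hfactpos i).le)
        exact_mod_cast (le_max_left _ _)
      have hC4N := hC4 N x.1 (fun i _ => hbnd i) ⟨j₀, by omega, hj₀⟩
      have htail : ∀ J, N ≤ J → ∃ a ∈ V N, ∃ b ∈ V N,
          (∑ i ∈ Finset.Ico N J, x.1 i • mv i) = a + b := by
        intro J hJ
        have hJeq : J = N + (J - N) := by omega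
        rw [hJeq]
        refine sumv x.1 (J - N) N hN1 (fun i h1 h2 => ?_)
        refine hC5 i (x.1 i) ((hbnd i).trans ?_)
        exact mul_le_mul_of_nonneg_right (Nat.cast_le.mpr (by omega)) (hfactpos i).le
      have hsplit : ∀ J, N ≤ J → (∑ i ∈ Finset.range J, x.1 i • mv i) =
          (∑ i ∈ Finset.range N, x.1 i • mv i) + ∑ i ∈ Finset.Ico N J, x.1 i • mv i := by
        intro J hJ
        simp only [Finset.range_eq_Ico]
        exact (Finset.sum_Ico_consecutive _ (Nat.zero_le N) hJ).symm
      have htend : Filter.Tendsto (fun J => ∑ i ∈ Finset.Ico N J, x.1 i • mv i)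
          Filter.atTop (nhds (-(∑ i ∈ Finset.range N, x.1 i • mv i))) := by
        have h1 : Filter.Tendsto (fun J => (∑ i ∈ Finset.range J, x.1 i • mv i) -
            (∑ i ∈ Finset.range N, x.1 i • mv i)) Filter.atTop
            (nhds ((0 : M) - (∑ i ∈ Finset.range N, x.1 i • mv i))) := by
          refine Filter.Tendsto.sub ?_ tendsto_const_nhds
          rw [← hfx]
          exact hf x
        rw [zero_sub] at h1
        refine h1.congr' ?_
        filter_upwards [Filter.eventually_ge_atTop N] with J hJ
        rw [hsplit J hJ, add_sub_cancel_left]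
      refine hC4N (mem_closure_of_tendsto htend ?_)
      filter_upwards [Filter.eventually_ge_atTop N] with J hJ
      exact htail J hJ
    · intro hall
      refine tendsto_nhds_unique (hf x) ?_
      have heq : (fun J => ∑ i ∈ Finset.range J, x.1 i • mv i) = (fun _ => (0 : M)) := by
        funext J
        refine Finset.sum_eq_zero (fun i _ => ?_)
        exact hCS i (x.1 i) (hall i)
      rw [heq]
      exact tendsto_const_nhds
  -- continuity
  have hsubL1 : ∀ (xx yy : ℕ → R), MemL1 ν xx → MemL1 ν yy → MemL1 ν (yy - xx) := by
    intro xx yy hx hy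
    refine Summable.of_nonneg_of_le (fun k => div_nonneg (hnonneg _) (hfactpos k).le)
      (fun k => ?_) (hy.add hx)
    have h1 : ν ((yy - xx) k) ≤ ν (yy k) + ν (xx k) := by
      have h0 : (yy - xx) k = yy k + (-(xx k)) := by
        simp [Pi.sub_apply, sub_eq_add_neg]
      rw [h0]
      exact (hadd _ _).trans (by rw [hneg])
    have h2 : ν (yy k) / (Nat.factorial k : ℝ) + ν (xx k) / (Nat.factorial k : ℝ) =
        (ν (yy k) + ν (xx k)) / (Nat.factorial k : ℝ) := (add_div _ _ _).symm
    rw [h2]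
    exact (div_le_div_iff_of_pos_right (hfactpos k)).mpr h1
  have hCont : ∀ x : {x : ℕ → R // MemL1 ν x}, ∀ U ∈ nhds (f x),
      ∃ δ > 0, ∀ y : {x : ℕ → R // MemL1 ν x},
        l1Norm ν (y.1 - x.1) < δ → f y ∈ U := by
    intro x U hU
    have hW : (fun w : M => f x + w) ⁻¹' U ∈ nhds (0 : M) := by
      refine (continuous_const.add continuous_id).continuousAt.preimage_mem_nhds ?_
      simpa using hU
    obtain ⟨ε, hε0, hεsub⟩ := Metric.mem_nhds_iff.mp hW
    obtain ⟨K₀, hK₀⟩ := exists_pow_lt_of_lt_one hε0 (by norm_num : (1/2 : ℝ) < 1)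
    set K := max K₀ 1 with hKdef
    have hK1 : 1 ≤ K := by omega
    have hKpow : (1/2 : ℝ)^K < ε :=
      lt_of_le_of_lt (pow_le_pow_of_le_one (by norm_num) (by norm_num) (le_max_left _ _)) hK₀
    have hden : (0 : ℝ) < c / (Nat.factorial (K - 1) : ℝ) := div_pos hc0 (hfactpos _)
    refine ⟨min 1 (c / (Nat.factorial (K - 1) : ℝ)), lt_min one_pos hden, ?_⟩
    intro y hy
    set z : ℕ → R := y.1 - x.1 with hzdef
    have hzL1 : MemL1 ν z := hsubL1 x.1 y.1 x.2 y.2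
    have hzbnd : ∀ i, ν (z i) ≤ l1Norm ν z * (Nat.factorial i : ℝ) := by
      intro i
      have h1 : ν (z i) / (Nat.factorial i : ℝ) ≤ l1Norm ν z :=
        Summable.le_tsum hzL1 i (fun j _ => div_nonneg (hnonneg _) (hfactpos j).le)
      rw [div_le_iff₀ (hfactpos i)] at h1
      exact h1
    have hhead : ∀ i, i < K → z i = 0 := by
      intro i hi
      refine hc (z i) ?_
      calc ν (z i) ≤ l1Norm ν z * (Nat.factorial i : ℝ) := hzbnd i
        _ < (c / (Nat.factorial (K - 1) : ℝ)) * (Nat.factorial i : ℝ) :=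
          mul_lt_mul_of_pos_right (lt_of_lt_of_le hy (min_le_right _ _)) (hfactpos i)
        _ ≤ (c / (Nat.factorial (K - 1) : ℝ)) * (Nat.factorial (K - 1) : ℝ) := by
          refine mul_le_mul_of_nonneg_left ?_ hden.le
          exact_mod_cast Nat.factorial_le (by omega : i ≤ K - 1)
        _ = c := div_mul_cancel₀ c (hfactpos _).ne'
    have hcl : f ⟨z, hzL1⟩ ∈ closure {w : M | ∃ a ∈ V K, ∃ b ∈ V K, w = a + b} := by
      refine mem_closure_of_tendsto (hf ⟨z, hzL1⟩) ?_
      filter_upwards [Filter.eventually_ge_atTop K] with J hJ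
      have hform : (∑ i ∈ Finset.range J, z i • mv i) =
          ∑ i ∈ Finset.Ico K J, z i • mv i := by
        simp only [Finset.range_eq_Ico]
        rw [← Finset.sum_Ico_consecutive _ (Nat.zero_le K) hJ]
        have hz0 : (∑ i ∈ Finset.Ico 0 K, z i • mv i) = 0 :=
          Finset.sum_eq_zero (fun i hi => by
            rw [hhead i (Finset.mem_Ico.mp hi).2, zero_smul])
        rw [hz0, zero_add]
      have hJeq : J = K + (J - K) := by omega
      rw [hform, hJeq]
      refine sumv z (J - K) K hK1 (fun i h1 h2 => ?_)
      refine hC5 i (z i) ?_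
      have hb1 : ν (z i) ≤ (1 : ℝ) * (Nat.factorial i : ℝ) := by
        calc ν (z i) ≤ l1Norm ν z * (Nat.factorial i : ℝ) := hzbnd i
          _ ≤ 1 * (Nat.factorial i : ℝ) := by
            refine mul_le_mul_of_nonneg_right ?_ (hfactpos i).le
            exact le_of_lt (lt_of_lt_of_le hy (min_le_left _ _))
      refine hb1.trans (mul_le_mul_of_nonneg_right ?_ (hfactpos i).le)
      exact_mod_cast (by omega : 1 ≤ i)
    have hfinal : f ⟨z, hzL1⟩ ∈ Metric.ball (0 : M) ε := by
      have h1 : {w : M | ∃ a ∈ V K, ∃ b ∈ V K, w = a + b} ⊆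
          Metric.ball (0 : M) ((1/2 : ℝ)^K) := by
        rintro w ⟨a, ha, b, hb, rfl⟩
        exact hCball K a ha b hb
      exact Metric.closedBall_subset_ball hKpow
        (((closure_mono h1).trans Metric.closure_ball_subset_closedBall) hcl)
    have hyx : x.1 + z = y.1 := by
      rw [hzdef, add_comm]
      exact sub_add_cancel y.1 x.1
    have hmem2 : MemL1 ν (x.1 + z) := by
      rw [hyx]
      exact y.2
    have hfy : f y = f x + f ⟨z, hzL1⟩ := by
      have h3 := hAdd x ⟨z, hzL1⟩ hmem2
      have h4 : (⟨x.1 + z, hmem2⟩ : {x : ℕ → R // MemL1 ν x}) = y := Subtype.ext hyx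
      rw [h4] at h3
      exact h3
    rw [hfy]
    exact hεsub hfinal
  have hInetop : I ≠ ⊤ := by
    intro htop
    refine hS_unc (Set.Countable.mono ?_ (Set.countable_singleton (0 : M)))
    intro m hm
    have h1 := hm 1 (htop ▸ Submodule.mem_top)
    rw [one_smul] at h1
    exact h1
  exact ⟨I, hInetop, hIFam.1, f, hAdd, hSmul, hCont, hKer⟩
end

section
/- Let A be an uncountable abelian Polish group. Then either there is a continuous injective group homomorphism ℓ¹(ℤ) → A, or there is a prime p and a continuous injective group homomorphism (ℤ/pℤ)^ℕ → A. -/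
set_option linter.unusedSectionVars false
set_option linter.unnecessarySimpa false
set_option linter.unusedVariables false
set_option maxHeartbeats 1000000

open Filter Topology Set Pointwise


/-- Membership in `ℓ¹(ℤ)`: the series `Σ |x k| / k!` converges. -/
def MemL1Z (x : ℕ → ℤ) : Prop :=
  Summable fun k => (|x k| : ℝ) / (Nat.factorial k : ℝ)

/-- The `ℓ¹` norm `Σ_k |x k| / k!` on `ℓ¹(ℤ)`. -/
noncomputable def l1NormZ (x : ℕ → ℤ) : ℝ :=
  ∑' k, (|x k| : ℝ) / (Nat.factorial k : ℝ)

/-- `ℤ/nℤ` carries the discrete topology. -/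
instance (n : ℕ) : TopologicalSpace (ZMod n) := ⊥

namespace S17

section SeqChoice
variable {α : Type*} [Inhabited α]

private noncomputable def seqF (P : ℕ → (ℕ → α) → Prop)
    (hex : ∀ k f, (∀ j, j < k → P j f) → ∃ x, P k (Function.update f k x))
    (hdep : ∀ k f g, (∀ j, j ≤ k → f j = g j) → P k f → P k g) :
    (k : ℕ) → {g : ℕ → α // ∀ j, j < k → P j g}
  | 0 => ⟨fun _ => default, by omega⟩
  | k+1 =>
    let prev := seqF P hex hdep k
    ⟨Function.update prev.1 k (Classical.choose (hex k prev.1 prev.2)), by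
      intro j hj
      by_cases hjk : j < k
      · exact hdep j _ _ (fun i hi => (Function.update_of_ne (by omega) _ _).symm) (prev.2 j hjk)
      · have hj' : j = k := by omega
        have hspec := Classical.choose_spec (hex k prev.1 prev.2)
        rwa [hj']⟩

private lemma seqF_coh (P : ℕ → (ℕ → α) → Prop) (hex) (hdep) :
    ∀ k j, j < k → (seqF P hex hdep k).1 j = (seqF P hex hdep (j+1)).1 j := by
  intro k
  induction k with
  | zero => omega
  | succ k ih =>
    intro j hj
    rcases Nat.lt_succ_iff_lt_or_eq.mp hj with h | rfl
    · have hrw : (seqF P hex hdep (k+1)).1 =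
        Function.update (seqF P hex hdep k).1 k
          (Classical.choose (hex k (seqF P hex hdep k).1 (seqF P hex hdep k).2)) := rfl
      rw [hrw, Function.update_of_ne (by omega)]
      exact ih j h
    · rfl

lemma seq_choice (P : ℕ → (ℕ → α) → Prop)
    (hex : ∀ k f, (∀ j, j < k → P j f) → ∃ x, P k (Function.update f k x))
    (hdep : ∀ k f g, (∀ j, j ≤ k → f j = g j) → P k f → P k g) :
    ∃ f : ℕ → α, ∀ k, P k f := by
  refine ⟨fun k => (seqF P hex hdep (k+1)).1 k, fun k => ?_⟩
  refine hdep k ((seqF P hex hdep (k+1)).1) _ (fun j hj => ?_)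
    ((seqF P hex hdep (k+1)).2 k (by omega))
  rcases eq_or_lt_of_le hj with rfl | h
  · rfl
  · exact seqF_coh P hex hdep (k+1) j (by omega)

end SeqChoice

section Chain
variable {A : Type*} [AddCommGroup A] [TopologicalSpace A] [IsTopologicalAddGroup A]

/-- A chain of symmetric neighborhoods of 0 forming a basis, with doubling. -/
structure Chain (A : Type*) [AddCommGroup A] [TopologicalSpace A] where
  V : ℕ → Set A
  zero_mem : ∀ n, (0:A) ∈ V n
  neg_mem : ∀ n a, a ∈ V n → -a ∈ V n
  add_mem : ∀ n a b, a ∈ V (n+1) → b ∈ V (n+1) → a + b ∈ V n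
  mem_nhds : ∀ n, V n ∈ 𝓝 (0:A)
  basis : ∀ s ∈ 𝓝 (0:A), ∃ n, V n ⊆ s

lemma exists_chain [FirstCountableTopology A] : Nonempty (Chain A) := by
  obtain ⟨u, hu, hadd⟩ := IsTopologicalAddGroup.exists_antitone_basis_nhds_zero A
  have humem : ∀ n, u n ∈ 𝓝 (0:A) := fun n => hu.1.mem_of_mem trivial
  have hnegmem : ∀ n, Neg.neg ⁻¹' u n ∈ 𝓝 (0:A) := fun n =>
    continuous_neg.continuousAt.preimage_mem_nhds (by simpa using humem n)
  refine ⟨⟨fun n => u n ∩ (Neg.neg ⁻¹' u n), ?_, ?_, ?_, ?_, ?_⟩⟩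
  · intro n; exact ⟨mem_of_mem_nhds (humem n), by simpa using mem_of_mem_nhds (humem n)⟩
  · intro n a ha; exact ⟨ha.2, by simpa using ha.1⟩
  · intro n a b ha hb
    refine ⟨hadd n (Set.add_mem_add ha.1 hb.1), ?_⟩
    have : -a + -b ∈ u n := hadd n (Set.add_mem_add ha.2 hb.2)
    simpa [Set.mem_preimage, neg_add, add_comm] using this
  · intro n; exact Filter.inter_mem (humem n) (hnegmem n)
  · intro s hs
    obtain ⟨n, -, hn⟩ := hu.1.mem_iff.mp hs
    exact ⟨n, fun a ha => hn ha.1⟩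

variable (C : Chain A)

lemma Chain.anti {n : ℕ} : C.V (n+1) ⊆ C.V n := by
  intro a ha
  simpa using C.add_mem n a 0 ha (C.zero_mem _)

lemma Chain.anti_le {n m : ℕ} (h : n ≤ m) : C.V m ⊆ C.V n := by
  induction m with
  | zero => simpa [Nat.le_zero.mp h]
  | succ m ih =>
    rcases Nat.lt_succ_iff_lt_or_eq.mp (Nat.lt_succ_of_le h) with h' | rfl
    · exact (C.anti).trans (ih (by omega))
    · exact fun a ha => ha

/-- sums of elements deep in the chain stay controlled -/
lemma Chain.sum_mem (c : ℕ → A) (n : ℕ) : ∀ (B L : ℕ),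
    (∀ j, L ≤ j → j < L + n → c j ∈ C.V (B + 1 + (j - L))) →
      (∑ j ∈ Finset.Ico L (L + n), c j) ∈ C.V B := by
  induction n with
  | zero => intro B L h; simpa using C.zero_mem B
  | succ n ih =>
    intro B L h
    have hsplit : ∑ j ∈ Finset.Ico L (L + (n+1)), c j
        = c L + ∑ j ∈ Finset.Ico (L+1) (L + (n+1)), c j := by
      rw [Finset.sum_eq_sum_Ico_succ_bot (by omega)]
    rw [hsplit]
    have h1 : c L ∈ C.V (B + 1) := by simpa using h L le_rfl (by omega)
    have h2 : (∑ j ∈ Finset.Ico (L+1) (L+1+n), c j) ∈ C.V (B+1) := by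
      refine ih (B+1) (L+1) (fun j hj1 hj2 => ?_)
      have : B + 1 + 1 + (j - (L+1)) = B + 1 + (j - L) := by omega
      rw [this]
      exact h j (by omega) (by omega)
    have : L + 1 + n = L + (n+1) := by omega
    rw [this] at h2
    exact C.add_mem B _ _ h1 h2

lemma Chain.sum_mem' (c : ℕ → A) (B L R : ℕ)
    (h : ∀ j, L ≤ j → j < R → c j ∈ C.V (B + 1 + (j - L))) :
    (∑ j ∈ Finset.Ico L R, c j) ∈ C.V B := by
  rcases le_or_gt L R with hLR | hLR
  · have : R = L + (R - L) := by omega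
    rw [this]
    exact C.sum_mem c (R - L) B L (fun j h1 h2 => h j h1 (by omega))
  · rw [Finset.Ico_eq_empty (by omega)]
    simpa using C.zero_mem B

lemma Chain.closure_subset {n : ℕ} : closure (C.V (n+1)) ⊆ C.V n := by
  intro x hx
  have hmem : (fun y => x + y) '' C.V (n+1) ∈ 𝓝 x := by
    have := map_add_left_nhds_zero x
    rw [← this]
    exact Filter.image_mem_map (C.mem_nhds (n+1))
  obtain ⟨y, hy1, hy2⟩ := mem_closure_iff_nhds.mp hx _ hmem
  obtain ⟨v, hv, rfl⟩ := hy1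
  have : x + v + -v ∈ C.V n := C.add_mem n _ _ hy2 (C.neg_mem _ _ hv)
  simpa using this

lemma Chain.mem_of_tendsto {s : ℕ → A} {L : A} {n : ℕ} (h : Tendsto s atTop (𝓝 L))
    (hs : ∀ᶠ k in atTop, s k ∈ C.V (n+1)) : L ∈ C.V n :=
  C.closure_subset (mem_closure_of_tendsto h hs)

/-- separation: finitely many nonzero elements avoid a triple chain set -/
lemma Chain.exists_sep [T1Space A] (S : Set A) (hS : S.Finite) (h0 : ∀ s ∈ S, s ≠ (0:A)) :
    ∃ i, ∀ s ∈ S, s ∉ C.V i + C.V i + C.V i := by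
  have key : ∀ s : A, ∃ W, W ∈ 𝓝 (0:A) ∧ (s ≠ 0 →
      ∀ a ∈ W, ∀ b ∈ W, ∀ c ∈ W, a + b + c ≠ s) := by
    intro s
    by_cases hs : s ≠ 0
    · have hcs : ({s}ᶜ : Set A) ∈ 𝓝 (0:A) :=
        (isOpen_compl_singleton).mem_nhds (by simpa using (Ne.symm hs))
      obtain ⟨W₁, hW₁, hsplit₁⟩ := exists_nhds_zero_half hcs
      obtain ⟨W₂, hW₂, hsplit₂⟩ := exists_nhds_zero_half hW₁
      refine ⟨W₁ ∩ W₂, Filter.inter_mem hW₁ hW₂, fun _ a ha b hb c hc => ?_⟩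
      have hab : a + b ∈ W₁ := hsplit₂ a ha.2 b hb.2
      have : (a + b) + c ∈ ({s}ᶜ : Set A) := hsplit₁ _ hab _ hc.1
      simpa using this
    · exact ⟨univ, Filter.univ_mem, fun h => absurd h hs⟩
  choose W hW hsep using key
  have hN : (⋂ s ∈ S, W s) ∈ 𝓝 (0:A) := (Filter.biInter_mem hS).mpr (fun s _ => hW s)
  obtain ⟨i, hi⟩ := C.basis _ hN
  refine ⟨i, fun s hs hmem => ?_⟩
  obtain ⟨y, hy, c, hc, heq⟩ := hmem
  obtain ⟨a, ha, b, hb, rfl⟩ := hy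
  have hsub : C.V i ⊆ W s := hi.trans (by intro x hx; exact mem_iInter₂.mp hx s hs)
  exact hsep s (h0 s hs) a (hsub ha) b (hsub hb) c (hsub hc) heq

/-- small elements have all small (bounded) natural multiples -/
lemma small_nsmul (M : ℕ) : ∀ {N : Set A}, N ∈ 𝓝 (0:A) →
    ∃ O ∈ 𝓝 (0:A), ∀ a ∈ O, ∀ m : ℕ, m ≤ M → m • a ∈ N := by
  induction M with
  | zero =>
    intro N hN
    refine ⟨N, hN, fun a _ m hm => ?_⟩
    have : m = 0 := by omega
    simpa [this] using mem_of_mem_nhds hN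
  | succ M ih =>
    intro N hN
    obtain ⟨W, hW, hWadd⟩ := exists_nhds_zero_half hN
    obtain ⟨O', hO', hmul⟩ := ih hW
    refine ⟨O' ∩ W, Filter.inter_mem hO' hW, fun a ha m hm => ?_⟩
    match m with
    | 0 => simpa using mem_of_mem_nhds hN
    | (m'+1) =>
      rw [succ_nsmul]
      exact hWadd _ (hmul a ha.1 m' (by omega)) _ ha.2
  
/-- small elements have all small (bounded) integer multiples -/
lemma small_zsmul {N : Set A} (hN : N ∈ 𝓝 (0:A)) (M : ℕ) :
    ∃ O ∈ 𝓝 (0:A), ∀ a ∈ O, ∀ m : ℤ, m.natAbs ≤ M → m • a ∈ N := by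
  obtain ⟨O', hO', hmul⟩ := small_nsmul M hN
  have hneg : (Neg.neg ⁻¹' O') ∈ 𝓝 (0:A) :=
    continuous_neg.continuousAt.preimage_mem_nhds (by simpa using hO')
  refine ⟨O' ∩ (Neg.neg ⁻¹' O'), Filter.inter_mem hO' hneg, fun a ha m hm => ?_⟩
  rcases le_or_gt 0 m with hm0 | hm0
  · have : m • a = m.natAbs • a := by
      rw [← Int.natAbs_of_nonneg hm0, natCast_zsmul]
      simp [Int.natAbs_of_nonneg hm0]
    rw [this]
    exact hmul a ha.1 _ hm
  · have h2 : m = -(m.natAbs : ℤ) := by omega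
    have h1 : m • a = m.natAbs • (-a) := by
      conv_lhs => rw [h2]
      rw [neg_zsmul, natCast_zsmul, ← smul_neg]
    rw [h1]
    exact hmul (-a) ha.2 _ hm

end Chain

section Count
variable {A : Type*} [AddCommGroup A] [TopologicalSpace A] [IsTopologicalAddGroup A]

/-- in a second countable group, a "subgroup-like" uncountable set is uncountable near 0 -/
lemma uncount_inter [SecondCountableTopology A] {T : Set A}
    (hsub : ∀ x ∈ T, ∀ y ∈ T, x - y ∈ T) (hT : ¬ T.Countable)
    {U : Set A} (hU : U ∈ 𝓝 (0:A)) : ¬ (T ∩ U).Countable := by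
  intro hcount
  -- symmetric sub-neighborhood
  set O : Set A := U ∩ (Neg.neg ⁻¹' U) with hO
  have hOnhds : O ∈ 𝓝 (0:A) := Filter.inter_mem hU
    (continuous_neg.continuousAt.preimage_mem_nhds (by simpa using hU))
  have hOsymm : ∀ a ∈ O, -a ∈ O := by
    rintro a ⟨h1, h2⟩; exact ⟨h2, by simpa using h1⟩
  -- countable dense subset of the subtype T
  obtain ⟨D, hDc, hDd⟩ := TopologicalSpace.exists_countable_dense (↥T)
  have hcover : T ⊆ ⋃ q ∈ D, (fun z => (q : A) + z) '' (T ∩ O) := by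
    intro t ht
    have hC : (fun y : A => y - t) ⁻¹' O ∈ 𝓝 t := by
      refine (continuous_id.sub continuous_const).continuousAt.preimage_mem_nhds ?_
      simpa using hOnhds
    have hC' : ((↑) : ↥T → A) ⁻¹' ((fun y : A => y - t) ⁻¹' O) ∈ 𝓝 (⟨t, ht⟩ : ↥T) :=
      continuous_subtype_val.continuousAt.preimage_mem_nhds hC
    obtain ⟨q, hq1, hq2⟩ := mem_closure_iff_nhds.mp (hDd (⟨t, ht⟩ : ↥T)) _ hC'
    have hq3 : (q : A) - t ∈ O := hq1
    have hmem : t - (q : A) ∈ T ∩ O :=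
      ⟨hsub t ht (q : A) q.2, by simpa [neg_sub] using hOsymm _ hq3⟩
    exact Set.mem_biUnion hq2 ⟨t - (q : A), hmem, by show (q:A) + (t - q) = t; rw [add_comm, sub_add_cancel]⟩
  have : T.Countable := by
    refine Set.Countable.mono hcover ?_
    refine Set.Countable.biUnion hDc (fun q _ => ?_)
    exact Set.Countable.image (hcount.mono (inter_subset_inter_right _ (by exact fun x hx => hx.1))) _
  exact hT this

end Count

section Alg
variable {A : Type*} [AddCommGroup A]

/-- torsion set -/
def Tor (A : Type*) [AddCommGroup A] (m : ℕ) : Set A := {a | m • a = 0}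

private lemma nsmul_sub' (n : ℕ) (a b : A) : n • (a - b) = n • a - n • b := by
  induction n with
  | zero => simp
  | succ n ih => rw [succ_nsmul, succ_nsmul, succ_nsmul, ih]; abel

lemma tor_aux : ∀ m : ℕ, 1 ≤ m → ¬ (Tor A m).Countable →
    ∃ p : ℕ, p.Prime ∧ ¬ (Tor A p).Countable := by
  intro m
  induction m using Nat.strong_induction_on with
  | _ m ih =>
    intro hm1 hmc
    rcases eq_or_lt_of_le hm1 with h1 | h2
    · exfalso
      apply hmc
      have : Tor A m = {0} := by
        ext a; simp [Tor, ← h1]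
      rw [this]; exact Set.countable_singleton 0
    · set p := m.minFac with hpdef
      have hp : p.Prime := Nat.minFac_prime (by omega)
      set m' := m / p with hm'def
      have hfact : p * m' = m := Nat.mul_div_cancel' (Nat.minFac_dvd m)
      have hm'1 : 1 ≤ m' := Nat.one_le_div_iff hp.pos |>.mpr (Nat.minFac_le (by omega))
      have hm'lt : m' < m := Nat.div_lt_self (by omega) hp.one_lt
      by_cases hc : (Tor A m').Countable
      · refine ⟨p, hp, fun hpc => hmc ?_⟩
        have hcover : Tor A m ⊆
            ⋃ c ∈ (fun a : A => m' • a) '' Tor A m, {a | a ∈ Tor A m ∧ m' • a = c} :=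
          fun a ha => Set.mem_biUnion ⟨a, ha, rfl⟩ ⟨ha, rfl⟩
        refine Set.Countable.mono hcover ?_
        refine Set.Countable.biUnion ?_ (fun c _ => ?_)
        · refine Set.Countable.mono ?_ hpc
          rintro c ⟨a, ha, rfl⟩
          show p • m' • a = 0
          rw [← mul_nsmul, mul_comm, hfact]
          exact ha
        · by_cases hne : {a | a ∈ Tor A m ∧ m' • a = c}.Nonempty
          · obtain ⟨a₀, ha₀⟩ := hne
            have hsub : {a | a ∈ Tor A m ∧ m' • a = c} ⊆ (fun z => a₀ + z) '' Tor A m' := by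
              rintro a ⟨ha1, ha2⟩
              refine ⟨a - a₀, ?_, by show a₀ + (a - a₀) = a; rw [add_comm, sub_add_cancel]⟩
              show m' • (a - a₀) = 0
              rw [nsmul_sub', ha2, ha₀.2, sub_self]
            exact Set.Countable.mono hsub (hc.image _)
          · rw [Set.not_nonempty_iff_eq_empty] at hne
            rw [hne]; exact Set.countable_empty
      · exact ih m' hm'lt hm'1 hc

/-- finite integer combinations of `a 0, ..., a (k-1)` -/
def Hset (a : ℕ → A) (k : ℕ) : Set A :=
  Set.range (fun y : Fin k → ℤ => ∑ j : Fin k, y j • a (j : ℕ))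

lemma Hset_countable (a : ℕ → A) (k : ℕ) : (Hset a k).Countable :=
  Set.countable_range _

lemma zero_mem_Hset (a : ℕ → A) (k : ℕ) : (0:A) ∈ Hset a k :=
  ⟨0, by simp⟩

lemma cmb_mem_Hset (a : ℕ → A) (y : ℕ → ℤ) (k : ℕ) :
    (∑ j ∈ Finset.range k, y j • a j) ∈ Hset a k :=
  ⟨fun j => y (j : ℕ), Fin.sum_univ_eq_sum_range (fun j => y j • a j) k⟩

lemma neg_mem_Hset (a : ℕ → A) (k : ℕ) {x : A} (hx : x ∈ Hset a k) : -x ∈ Hset a k := by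
  obtain ⟨y, rfl⟩ := hx
  exact ⟨-y, by simp [neg_zsmul]⟩

/-- a nonzero bounded-support combination of "free" elements is nonzero -/
lemma combo_ne_zero (a : ℕ → A) (K : ℕ)
    (hfree : ∀ k, k ≤ K → ∀ m : ℤ, m ≠ 0 → m • a k ∉ Hset a k)
    (y : ℕ → ℤ) (hy : ∃ j, j ≤ K ∧ y j ≠ 0) :
    (∑ j ∈ Finset.range (K+1), y j • a j) ≠ 0 := by
  classical
  obtain ⟨j₀, hj₀K, hj₀⟩ := hy
  obtain ⟨J, hJspec, hJK, hzero⟩ :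
      ∃ J, y J ≠ 0 ∧ J ≤ K ∧ ∀ i, J < i → i ≤ K → y i = 0 :=
    ⟨Nat.findGreatest (fun j => y j ≠ 0) K,
      Nat.findGreatest_spec (P := fun j => y j ≠ 0) hj₀K hj₀,
      Nat.findGreatest_le K,
      fun i h1 h2 => by
        by_contra hyi
        exact Nat.findGreatest_is_greatest (P := fun j => y j ≠ 0) h1 h2 hyi⟩
  have hsum : (∑ j ∈ Finset.range (K+1), y j • a j) = ∑ j ∈ Finset.range (J+1), y j • a j := by
    refine (Finset.sum_subset ?_ ?_).symm
    · exact Finset.range_subset_range.mpr (by omega)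
    · intro i hi1 hi2
      simp only [Finset.mem_range] at hi1 hi2
      rw [hzero i (by omega) (by omega), zero_smul]
  rw [hsum, Finset.sum_range_succ]
  intro heq
  have : y J • a J = -(∑ j ∈ Finset.range J, y j • a j) := by
    rw [eq_neg_iff_add_eq_zero, add_comm]; exact heq
  exact hfree J hJK (y J) hJspec (this ▸ neg_mem_Hset a J (cmb_mem_Hset a y J))

/-- multiples `m • a` with `0 < m < p` of an element of order `p` are nonzero -/
lemma prime_smul_ne_zero {p : ℕ} (hp : p.Prime) {a : A} (hpa : p • a = 0) (ha : a ≠ 0)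
    {m : ℕ} (h1 : 0 < m) (h2 : m < p) : m • a ≠ 0 := by
  intro h
  apply ha
  have hcop : Nat.gcd m p = 1 := by
    have : Nat.Coprime p m := hp.coprime_iff_not_dvd.mpr
      (fun hd => by have := Nat.le_of_dvd h1 hd; omega)
    exact this.symm
  have hbez : (1 : ℤ) = m * Nat.gcdA m p + p * Nat.gcdB m p := by
    have h := Nat.gcd_eq_gcd_ab m p
    rw [hcop] at h
    exact_mod_cast h
  have : a = (1 : ℤ) • a := (one_zsmul a).symm
  rw [this, hbez, add_zsmul, mul_comm (m:ℤ), mul_comm (p:ℤ), mul_zsmul, mul_zsmul,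
    natCast_zsmul, natCast_zsmul, h, hpa, smul_zero, smul_zero, add_zero]

end Alg

section CaseTwo
variable {A : Type*} [AddCommGroup A] [MetricSpace A] [IsTopologicalAddGroup A]
  [CompleteSpace A] [SecondCountableTopology A]

/-- possible partial sums with coefficients `< p` and indices `< k` -/
private def PSp (a : ℕ → A) (p k : ℕ) : Set A :=
  Set.range (fun y : Fin k → Fin p => ∑ j : Fin k, (y j : ℕ) • a (j : ℕ))

private lemma PSp_finite (a : ℕ → A) (p k : ℕ) : (PSp a p k).Finite :=
  Set.finite_range _

private lemma PSp_congr {a a' : ℕ → A} (p k : ℕ) (h : ∀ j, j < k → a j = a' j) :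
    PSp a p k = PSp a' p k := by
  have hfun : (fun y : Fin k → Fin p => ∑ j : Fin k, (y j : ℕ) • a (j:ℕ))
      = (fun y : Fin k → Fin p => ∑ j : Fin k, (y j : ℕ) • a' (j:ℕ)) :=
    funext fun y => Finset.sum_congr rfl (fun j _ => by rw [h j j.2])
  unfold PSp
  rw [hfun]

private def Pickp (C : Chain A) (a : ℕ → A) (i : ℕ → ℕ) (p k : ℕ) : Set A :=
  C.V k ∩ (⋂ n : Fin k, C.V (i n + (k - n))) ∩
    (⋂ S ∈ PSp a p k, {v | dist (S + v) S < (1/2 : ℝ)^k})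

private lemma Pickp_congr (C : Chain A) {a a' : ℕ → A} {i i' : ℕ → ℕ} (p k : ℕ)
    (ha : ∀ j, j < k → a j = a' j) (hi : ∀ j, j < k → i j = i' j) :
    Pickp C a i p k = Pickp C a' i' p k := by
  unfold Pickp
  rw [PSp_congr p k ha]
  congr 2
  exact Set.iInter_congr (fun n => by rw [hi n n.2])

private lemma Pickp_nhds (C : Chain A) (a : ℕ → A) (i : ℕ → ℕ) (p k : ℕ) :
    Pickp C a i p k ∈ 𝓝 (0:A) := by
  refine Filter.inter_mem (Filter.inter_mem (C.mem_nhds k) ?_) ?_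
  · exact Filter.iInter_mem.mpr (fun n => C.mem_nhds _)
  · refine (Filter.biInter_mem (PSp_finite a p k)).mpr (fun S _ => ?_)
    have hcont : Continuous (fun v : A => dist (S + v) S) :=
      (continuous_const.add continuous_id).dist continuous_const
    have : (fun v : A => dist (S + v) S) ⁻¹' (Iio ((1/2:ℝ)^k)) ∈ 𝓝 (0:A) := by
      refine hcont.continuousAt.preimage_mem_nhds ?_
      refine isOpen_Iio.mem_nhds ?_
      simp only [Set.mem_Iio, add_zero, dist_self]
      positivity
    exact this

private lemma Pickp_subset_V (C : Chain A) (a : ℕ → A) (i : ℕ → ℕ) (p k : ℕ) :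
    Pickp C a i p k ⊆ C.V k := fun v hv => hv.1.1

private lemma Pickp_subset_Vi (C : Chain A) (a : ℕ → A) (i : ℕ → ℕ) (p k n : ℕ) (hn : n < k) :
    Pickp C a i p k ⊆ C.V (i n + (k - n)) := by
  intro v hv
  exact Set.mem_iInter.mp hv.1.2 ⟨n, hn⟩

private lemma Pickp_dist (C : Chain A) (a : ℕ → A) (i : ℕ → ℕ) (p k : ℕ) {S v : A}
    (hS : S ∈ PSp a p k) (hv : v ∈ Pickp C a i p k) : dist (S + v) S < (1/2:ℝ)^k := by
  have := hv.2
  rw [Set.mem_iInter₂] at this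
  exact this S hS

private def Goodp (C : Chain A) (p : ℕ) (k : ℕ) (f : ℕ → A × ℕ) : Prop :=
  p • (f k).1 = 0 ∧ (f k).1 ≠ 0 ∧
  (∀ m : ℕ, m ≤ p → m • (f k).1 ∈ Pickp C (fun n => (f n).1) (fun n => (f n).2) p k) ∧
  (∀ m : ℕ, 0 < m → m < p → m • (f k).1 ∉
    C.V ((f k).2) + C.V ((f k).2) + C.V ((f k).2))

private lemma Goodp_dep (C : Chain A) (p : ℕ) :
    ∀ k f g, (∀ j, j ≤ k → f j = g j) → Goodp C p k f → Goodp C p k g := by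
  intro k f g hagree hf
  have hk := hagree k le_rfl
  have hpick : Pickp C (fun n => (f n).1) (fun n => (f n).2) p k
      = Pickp C (fun n => (g n).1) (fun n => (g n).2) p k :=
    Pickp_congr C p k (fun j hj => by rw [hagree j (le_of_lt hj)])
      (fun j hj => by rw [hagree j (le_of_lt hj)])
  refine ⟨by rw [← hk]; exact hf.1, by rw [← hk]; exact hf.2.1, ?_, ?_⟩
  · intro m hm
    rw [← hk, ← hpick]
    exact hf.2.2.1 m hm
  · intro m h1 h2
    rw [← hk]
    exact hf.2.2.2 m h1 h2

private lemma Goodp_ex (C : Chain A) {p : ℕ} (hp : p.Prime) (hT : ¬ (Tor A p).Countable) :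
    ∀ k f, (∀ j, j < k → Goodp C p j f) → ∃ x, Goodp C p k (Function.update f k x) := by
  intro k f _
  set a : ℕ → A := fun n => (f n).1 with ha
  set i : ℕ → ℕ := fun n => (f n).2 with hi
  obtain ⟨O, hO, hOmul⟩ := small_nsmul p (Pickp_nhds C a i p k)
  have huncount : ¬ (Tor A p ∩ O).Countable := by
    refine uncount_inter (fun x hx y hy => ?_) hT hO
    show p • (x - y) = 0
    rw [nsmul_sub', hx, hy, sub_self]
  obtain ⟨b, ⟨hbT, hbO⟩, hb0⟩ : ∃ b, b ∈ Tor A p ∩ O ∧ b ≠ 0 := by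
    by_contra hcon
    push_neg at hcon
    exact huncount (Set.Countable.mono (fun z hz => by
      rcases eq_or_ne z 0 with rfl | hne
      · exact Set.mem_singleton 0
      · exact absurd hne (by simpa using hcon z hz)) (Set.countable_singleton 0))
  obtain ⟨iK, hiK⟩ := C.exists_sep ((fun m : ℕ => m • b) '' (Set.Ico 1 p)) 
    (((Set.finite_Ico 1 p)).image _)
    (by
      rintro s ⟨m, ⟨hm1, hm2⟩, rfl⟩
      exact prime_smul_ne_zero hp hbT hb0 hm1 hm2)
  refine ⟨(b, iK), ?_, ?_, ?_, ?_⟩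
  · simp only [Goodp, Function.update_self]; exact hbT
  · simp only [Goodp, Function.update_self]; exact hb0
  · intro m hm
    have hpick : Pickp C (fun n => (Function.update f k (b, iK) n).1)
        (fun n => (Function.update f k (b, iK) n).2) p k = Pickp C a i p k :=
      Pickp_congr C p k (fun j hj => by rw [Function.update_of_ne (by omega)])
        (fun j hj => by rw [Function.update_of_ne (by omega)])
    rw [hpick, Function.update_self]
    exact hOmul b hbO m hm
  · intro m h1 h2
    rw [Function.update_self]
    exact hiK _ ⟨m, ⟨h1, h2⟩, rfl⟩

/-- Main case-2 lemma: `(ℤ/p)^ℕ` maps in continuously and injectively. -/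
lemma case_two {p : ℕ} (hp : p.Prime) (hT : ¬ (Tor A p).Countable) :
    ∃ f : (ℕ → ZMod p) →+ A, Continuous f ∧ Function.Injective f := by
  classical
  haveI : NeZero p := ⟨hp.pos.ne'⟩
  haveI : DiscreteTopology (ZMod p) := ⟨rfl⟩
  obtain ⟨C⟩ := exists_chain (A := A)
  haveI : Inhabited (A × ℕ) := ⟨(0, 0)⟩
  obtain ⟨g, hg⟩ := seq_choice (Goodp C p) (Goodp_ex C hp hT) (Goodp_dep C p)
  set a : ℕ → A := fun n => (g n).1 with ha
  set i : ℕ → ℕ := fun n => (g n).2 with hi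
  have hord : ∀ k, p • a k = 0 := fun k => (hg k).1
  have hane : ∀ k, a k ≠ 0 := fun k => (hg k).2.1
  have hsmall : ∀ k, ∀ m : ℕ, m ≤ p → m • a k ∈ Pickp C a i p k := fun k => (hg k).2.2.1
  have hsep : ∀ k, ∀ m : ℕ, 0 < m → m < p →
      m • a k ∉ C.V (i k) + C.V (i k) + C.V (i k) := fun k => (hg k).2.2.2
  -- partial sums
  set Sp : (ℕ → ZMod p) → ℕ → A := fun x K => ∑ j ∈ Finset.range K, (x j).val • a j with hSp
  have hSpmem : ∀ x K, Sp x K ∈ PSp a p K := by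
    intro x K
    exact ⟨fun j => ⟨(x (j:ℕ)).val, ZMod.val_lt _⟩,
      Fin.sum_univ_eq_sum_range (fun j => (x j).val • a j) K⟩
  have hterm : ∀ (x : ℕ → ZMod p) (k : ℕ), (x k).val • a k ∈ Pickp C a i p k :=
    fun x k => hsmall k _ (le_of_lt (ZMod.val_lt _))
  have hconv : ∀ x : ℕ → ZMod p, ∃ L, Tendsto (Sp x) atTop (𝓝 L) := by
    intro x
    refine cauchySeq_tendsto_of_complete ?_
    refine cauchySeq_of_dist_le_of_summable (fun k => (1/2:ℝ)^k) (fun k => ?_) summable_geometric_two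
    have hstep : Sp x (k+1) = Sp x k + (x k).val • a k := Finset.sum_range_succ _ _
    rw [hstep, dist_comm]
    exact le_of_lt (Pickp_dist C a i p k (hSpmem x k) (hterm x k))
  set fp : (ℕ → ZMod p) → A := fun x => Classical.choose (hconv x) with hfp
  have hfpt : ∀ x, Tendsto (Sp x) atTop (𝓝 (fp x)) := fun x => Classical.choose_spec (hconv x)
  -- homomorphism
  have hSadd : ∀ x y K, Sp (x + y) K = Sp x K + Sp y K := by
    intro x y K
    rw [hSp, ← Finset.sum_add_distrib]
    refine Finset.sum_congr rfl (fun j _ => ?_)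
    show ((x j + y j).val) • a j = (x j).val • a j + (y j).val • a j
    have hmod : ∀ n : ℕ, n • a j = (n % p) • a j := by
      intro n
      conv_lhs => rw [← Nat.mod_add_div n p]
      rw [add_nsmul, mul_nsmul, hord, smul_zero, add_zero]
    rw [ZMod.val_add, ← hmod, add_nsmul]
  have hadd : ∀ x y, fp (x + y) = fp x + fp y := by
    intro x y
    refine tendsto_nhds_unique (hfpt (x+y)) ?_
    exact Filter.Tendsto.congr (fun K => (hSadd x y K).symm) ((hfpt x).add (hfpt y))
  set F : (ℕ → ZMod p) →+ A := AddMonoidHom.mk' fp hadd with hF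
  -- key: tail estimates
  have htail : ∀ (x : ℕ → ZMod p) (n : ℕ), (∀ j, j < n → x j = 0) →
      fp x - Sp x (n+3) ∈ C.V (i n) := by
    intro x n hxz
    have hlim : Tendsto (fun L => Sp x L - Sp x (n+3)) atTop (𝓝 (fp x - Sp x (n+3))) :=
      (hfpt x).sub_const _
    refine C.mem_of_tendsto (n := i n) hlim ?_
    filter_upwards [Filter.eventually_ge_atTop (n+3)] with L hL
    have hdiff : Sp x L - Sp x (n+3) = ∑ j ∈ Finset.Ico (n+3) L, (x j).val • a j := by
      rw [hSp]
      rw [Finset.sum_Ico_eq_sub _ hL]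
    rw [hdiff]
    have hsum : (∑ j ∈ Finset.Ico (n+3) L, (x j).val • a j) ∈ C.V (i n + 2) := by
      refine C.sum_mem' _ (i n + 2) (n+3) L (fun j hj1 hj2 => ?_)
      have harith : i n + 2 + 1 + (j - (n+3)) = i n + (j - n) := by omega
      rw [harith]
      exact Pickp_subset_Vi C a i p j n (by omega) (hterm x j)
    exact C.anti_le (by omega) hsum
  have hlower : ∀ (x : ℕ → ZMod p) (n : ℕ), (∀ j, j < n → x j = 0) → x n ≠ 0 →
      ∀ K, n < K → Sp x K ∉ C.V (i n) + C.V (i n) := by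
    intro x n hxz hxn K hK hmem
    -- Sp x K = (x n).val • a n + tail
    have h1 : Sp x K = ∑ j ∈ Finset.Ico n K, (x j).val • a j := by
      rw [hSp]; beta_reduce; rw [Finset.range_eq_Ico]
      refine (Finset.sum_subset (Finset.Ico_subset_Ico (by omega) le_rfl) ?_).symm
      intro j hj1 hj2
      simp only [Finset.mem_Ico] at hj1 hj2
      rw [hxz j (by omega), ZMod.val_zero, zero_smul]
    have h2 : Sp x K = (x n).val • a n + ∑ j ∈ Finset.Ico (n+1) K, (x j).val • a j := by
      rw [h1, Finset.sum_eq_sum_Ico_succ_bot hK]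
    set P : A := ∑ j ∈ Finset.Ico (n+1) K, (x j).val • a j with hP
    have hPmem : P ∈ C.V (i n) := by
      refine C.sum_mem' _ (i n) (n+1) K (fun j hj1 hj2 => ?_)
      have harith : i n + 1 + (j - (n+1)) = i n + (j - n) := by omega
      rw [harith]
      exact Pickp_subset_Vi C a i p j n (by omega) (hterm x j)
    have : (x n).val • a n ∈ C.V (i n) + C.V (i n) + C.V (i n) := by
      have heq : (x n).val • a n = Sp x K + (-P) := by rw [h2]; abel
      rw [heq]
      exact Set.add_mem_add hmem (C.neg_mem _ _ hPmem)
    refine hsep n (x n).val ?_ (ZMod.val_lt _) this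
    exact Nat.pos_of_ne_zero (fun h => hxn ((ZMod.val_eq_zero _).mp h))
  -- injectivity
  have hinj0 : ∀ x : ℕ → ZMod p, fp x = 0 → x = 0 := by
    intro x hx0
    by_contra hxne
    have hex : ∃ j, x j ≠ 0 := by
      by_contra hc
      push_neg at hc
      exact hxne (funext hc)
    set n := Nat.find hex with hn
    have hxn : x n ≠ 0 := Nat.find_spec hex
    have hxz : ∀ j, j < n → x j = 0 := fun j hj => of_not_not (Nat.find_min hex hj)
    have h1 := hlower x n hxz hxn (n+3) (by omega)
    have h2 := htail x n hxz
    rw [hx0, zero_sub] at h2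
    apply h1
    have : Sp x (n+3) ∈ C.V (i n) := by
      have := C.neg_mem _ _ h2
      simpa using this
    exact ⟨Sp x (n+3), this, 0, C.zero_mem _, add_zero _⟩
  have hinj : Function.Injective F := by
    rw [injective_iff_map_eq_zero]
    exact fun x hx => hinj0 x hx
  -- continuity
  have hcont : Continuous F := by
    rw [continuous_iff_continuousAt]
    intro x
    rw [ContinuousAt, Filter.tendsto_def]
    intro U hU
    have hU0 : {v : A | fp x + v ∈ U} ∈ 𝓝 (0:A) := by
      have hc : Continuous (fun v : A => fp x + v) := continuous_const.add continuous_id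
      refine hc.continuousAt.preimage_mem_nhds ?_
      have hU' : U ∈ 𝓝 (fp x) := hU; simpa using hU'
    obtain ⟨j₀, hj₀⟩ := C.basis _ hU0
    have hsmallz : ∀ z : ℕ → ZMod p, (∀ j, j < j₀ + 3 → z j = 0) → fp z ∈ C.V j₀ := by
      intro z hz
      refine C.mem_of_tendsto (n := j₀) (hfpt z) ?_
      filter_upwards [Filter.eventually_ge_atTop (j₀+3)] with L hL
      have heq : Sp z L = ∑ j ∈ Finset.Ico (j₀+3) L, (z j).val • a j := by
        rw [hSp]; beta_reduce; rw [Finset.range_eq_Ico]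
        refine (Finset.sum_subset (Finset.Ico_subset_Ico (by omega) le_rfl) ?_).symm
        intro j hj1 hj2
        simp only [Finset.mem_Ico] at hj1 hj2
        rw [hz j (by omega), ZMod.val_zero, zero_smul]
      rw [heq]
      have hsum : (∑ j ∈ Finset.Ico (j₀+3) L, (z j).val • a j) ∈ C.V (j₀ + 2) := by
        refine C.sum_mem' _ (j₀+2) (j₀+3) L (fun j hj1 hj2 => ?_)
        have harith : j₀ + 2 + 1 + (j - (j₀+3)) = j := by omega
        rw [harith]
        exact Pickp_subset_V C a i p j (hterm z j)
      exact C.anti_le (by omega) hsum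
    have hNopen : IsOpen {y : ℕ → ZMod p | ∀ j, j < j₀ + 3 → y j = x j} := by
      have : {y : ℕ → ZMod p | ∀ j, j < j₀ + 3 → y j = x j}
          = ⋂ j : Fin (j₀+3), (fun y : ℕ → ZMod p => y (j:ℕ)) ⁻¹' {x (j:ℕ)} := by
        ext y
        simp only [Set.mem_setOf_eq, Set.mem_iInter, Set.mem_preimage, Set.mem_singleton_iff]
        constructor
        · intro h j; exact h j j.2
        · intro h j hj; exact h ⟨j, hj⟩
      rw [this]
      exact isOpen_iInter_of_finite (fun j => (continuous_apply (j:ℕ)).isOpen_preimage _ (isOpen_discrete _))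
    have hNmem : {y : ℕ → ZMod p | ∀ j, j < j₀ + 3 → y j = x j} ∈ 𝓝 x :=
      hNopen.mem_nhds (fun j _ => rfl)
    refine Filter.mem_of_superset hNmem ?_
    intro y hy
    show F y ∈ U
    have hFy : F y = fp x + fp (y - x) := by
      have : fp (y - x) + fp x = fp ((y - x) + x) := (hadd (y-x) x).symm
      rw [sub_add_cancel] at this
      show fp y = fp x + fp (y - x)
      rw [← this, add_comm]
    rw [hFy]
    refine hj₀ ?_
    refine hsmallz (y - x) (fun j hj => ?_)
    show y j - x j = 0
    rw [hy j hj, sub_self]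
  exact ⟨F, hcont, hinj⟩

end CaseTwo

section CaseOne
variable {A : Type*} [AddCommGroup A] [MetricSpace A] [IsTopologicalAddGroup A]
  [CompleteSpace A] [SecondCountableTopology A]

private lemma Hset_congr {A' : Type*} [AddCommGroup A'] {a a' : ℕ → A'} (k : ℕ)
    (h : ∀ j, j < k → a j = a' j) : Hset a k = Hset a' k := by
  have hfun : (fun y : Fin k → ℤ => ∑ j : Fin k, y j • a (j:ℕ))
      = (fun y : Fin k → ℤ => ∑ j : Fin k, y j • a' (j:ℕ)) :=
    funext fun y => Finset.sum_congr rfl (fun j _ => by rw [h j j.2])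
  unfold Hset
  rw [hfun]

/-- possible partial sums with coefficients bounded by `k * j!`, indices `< k` -/
private def PSl (a : ℕ → A) (k : ℕ) : Set A :=
  (fun y : Fin k → ℤ => ∑ j : Fin k, y j • a (j : ℕ)) ''
    {y | ∀ j : Fin k, |y j| ≤ (k : ℤ) * (Nat.factorial (j:ℕ) : ℤ)}

private lemma PSl_finite (a : ℕ → A) (k : ℕ) : (PSl a k).Finite := by
  refine Set.Finite.image _ ?_
  have heq : {y : Fin k → ℤ | ∀ j : Fin k, |y j| ≤ (k : ℤ) * (Nat.factorial (j:ℕ) : ℤ)}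
      = Set.pi Set.univ (fun j : Fin k =>
          Set.Icc (-((k : ℤ) * (Nat.factorial (j:ℕ) : ℤ))) ((k : ℤ) * (Nat.factorial (j:ℕ) : ℤ))) := by
    ext y
    simp [Set.mem_pi, abs_le, Pi.le_def, forall_and]
  rw [heq]
  exact Set.Finite.pi (fun j => Set.finite_Icc _ _)

private lemma PSl_congr {a a' : ℕ → A} (k : ℕ) (h : ∀ j, j < k → a j = a' j) :
    PSl a k = PSl a' k := by
  have hfun : (fun y : Fin k → ℤ => ∑ j : Fin k, y j • a (j:ℕ))
      = (fun y : Fin k → ℤ => ∑ j : Fin k, y j • a' (j:ℕ)) :=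
    funext fun y => Finset.sum_congr rfl (fun j _ => by rw [h j j.2])
  unfold PSl
  rw [hfun]

/-- nonzero combinations with coefficients bounded by `k * j!`, indices `≤ k` -/
private def NZl (a : ℕ → A) (k : ℕ) : Set A :=
  (fun y : Fin (k+1) → ℤ => ∑ j : Fin (k+1), y j • a (j : ℕ)) ''
    {y | (∀ j : Fin (k+1), |y j| ≤ (k : ℤ) * (Nat.factorial (j:ℕ) : ℤ)) ∧ y ≠ 0}

private lemma NZl_finite (a : ℕ → A) (k : ℕ) : (NZl a k).Finite := by
  have hfin : ({y : Fin (k+1) → ℤ |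
      ∀ j : Fin (k+1), |y j| ≤ (k : ℤ) * (Nat.factorial (j:ℕ) : ℤ)}).Finite := by
    have heq : {y : Fin (k+1) → ℤ | ∀ j : Fin (k+1), |y j| ≤ (k : ℤ) * (Nat.factorial (j:ℕ) : ℤ)}
        = Set.pi Set.univ (fun j : Fin (k+1) =>
            Set.Icc (-((k : ℤ) * (Nat.factorial (j:ℕ) : ℤ))) ((k : ℤ) * (Nat.factorial (j:ℕ) : ℤ))) := by
      ext y
      simp [Set.mem_pi, abs_le, Pi.le_def, forall_and]
    rw [heq]
    exact Set.Finite.pi (fun j => Set.finite_Icc _ _)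
  exact Set.Finite.image _ (hfin.subset (fun y hy => hy.1))

private lemma NZl_ne_zero (a : ℕ → A) (k : ℕ)
    (hfree : ∀ j, j ≤ k → ∀ m : ℤ, m ≠ 0 → m • a j ∉ Hset a j) :
    ∀ z ∈ NZl a k, z ≠ 0 := by
  rintro z ⟨y, ⟨_, hy0⟩, rfl⟩
  classical
  show (∑ j : Fin (k+1), y j • a (j:ℕ)) ≠ 0
  set y' : ℕ → ℤ := fun j => if h : j < k+1 then y ⟨j, h⟩ else 0 with hy'
  have hsum : (∑ j : Fin (k+1), y j • a (j:ℕ)) = ∑ j ∈ Finset.range (k+1), y' j • a j := by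
    rw [← Fin.sum_univ_eq_sum_range (fun j => y' j • a j) (k+1)]
    refine Finset.sum_congr rfl (fun j _ => ?_)
    rw [hy']
    simp [j.2]
  rw [hsum]
  refine combo_ne_zero a k hfree y' ?_
  obtain ⟨j, hj⟩ := Function.ne_iff.mp hy0
  refine ⟨j, by omega, ?_⟩
  rw [hy']
  simpa [j.2] using hj

private def Pickl (C : Chain A) (a : ℕ → A) (i : ℕ → ℕ) (k : ℕ) : Set A :=
  C.V k ∩ (⋂ n : Fin k, C.V (i n + (k - n))) ∩
    (⋂ S ∈ PSl a k, {v | dist (S + v) S < (1/2 : ℝ)^k})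

private lemma Pickl_congr (C : Chain A) {a a' : ℕ → A} {i i' : ℕ → ℕ} (k : ℕ)
    (ha : ∀ j, j < k → a j = a' j) (hi : ∀ j, j < k → i j = i' j) :
    Pickl C a i k = Pickl C a' i' k := by
  unfold Pickl
  rw [PSl_congr k ha]
  congr 2
  exact Set.iInter_congr (fun n => by rw [hi n n.2])

private lemma Pickl_nhds (C : Chain A) (a : ℕ → A) (i : ℕ → ℕ) (k : ℕ) :
    Pickl C a i k ∈ 𝓝 (0:A) := by
  refine Filter.inter_mem (Filter.inter_mem (C.mem_nhds k) ?_) ?_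
  · exact Filter.iInter_mem.mpr (fun n => C.mem_nhds _)
  · refine (Filter.biInter_mem (PSl_finite a k)).mpr (fun S _ => ?_)
    have hcont : Continuous (fun v : A => dist (S + v) S) :=
      (continuous_const.add continuous_id).dist continuous_const
    have : (fun v : A => dist (S + v) S) ⁻¹' (Iio ((1/2:ℝ)^k)) ∈ 𝓝 (0:A) := by
      refine hcont.continuousAt.preimage_mem_nhds ?_
      refine isOpen_Iio.mem_nhds ?_
      simp only [Set.mem_Iio, add_zero, dist_self]
      positivity
    exact this

private lemma Pickl_subset_V (C : Chain A) (a : ℕ → A) (i : ℕ → ℕ) (k : ℕ) :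
    Pickl C a i k ⊆ C.V k := fun v hv => hv.1.1

private lemma Pickl_subset_Vi (C : Chain A) (a : ℕ → A) (i : ℕ → ℕ) (k n : ℕ) (hn : n < k) :
    Pickl C a i k ⊆ C.V (i n + (k - n)) := by
  intro v hv
  exact Set.mem_iInter.mp hv.1.2 ⟨n, hn⟩

private lemma Pickl_dist (C : Chain A) (a : ℕ → A) (i : ℕ → ℕ) (k : ℕ) {S v : A}
    (hS : S ∈ PSl a k) (hv : v ∈ Pickl C a i k) : dist (S + v) S < (1/2:ℝ)^k := by
  have := hv.2
  rw [Set.mem_iInter₂] at this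
  exact this S hS

private def Goodl (C : Chain A) (k : ℕ) (f : ℕ → A × ℕ) : Prop :=
  (∀ m : ℤ, m ≠ 0 → m • (f k).1 ∉ Hset (fun n => (f n).1) k) ∧
  (∀ m : ℤ, m.natAbs ≤ (k+1) * Nat.factorial k →
    m • (f k).1 ∈ Pickl C (fun n => (f n).1) (fun n => (f n).2) k) ∧
  (∀ z ∈ NZl (fun n => (f n).1) k, z ∉ C.V ((f k).2) + C.V ((f k).2) + C.V ((f k).2))

private lemma Goodl_dep (C : Chain A) :
    ∀ k f g, (∀ j, j ≤ k → f j = g j) → Goodl C k f → Goodl C k g := by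
  intro k f g hagree hf
  have hk := hagree k le_rfl
  have hH : Hset (fun n => (f n).1) k = Hset (fun n => (g n).1) k :=
    Hset_congr k (fun j hj => by rw [hagree j (le_of_lt hj)])
  have hNZ : NZl (fun n => (f n).1) k = NZl (fun n => (g n).1) k := by
    unfold NZl
    have hfun : (fun y : Fin (k+1) → ℤ => ∑ j : Fin (k+1), y j • (f (j:ℕ)).1)
        = (fun y : Fin (k+1) → ℤ => ∑ j : Fin (k+1), y j • (g (j:ℕ)).1) :=
      funext fun y => Finset.sum_congr rfl
        (fun j _ => by rw [hagree j (Nat.lt_succ_iff.mp j.2)])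
    rw [hfun]
  have hpick : Pickl C (fun n => (f n).1) (fun n => (f n).2) k
      = Pickl C (fun n => (g n).1) (fun n => (g n).2) k :=
    Pickl_congr C k (fun j hj => by rw [hagree j (le_of_lt hj)])
      (fun j hj => by rw [hagree j (le_of_lt hj)])
  refine ⟨?_, ?_, ?_⟩
  · intro m hm
    rw [← hk, ← hH]
    exact hf.1 m hm
  · intro m hm
    rw [← hk, ← hpick]
    exact hf.2.1 m hm
  · intro z hz
    rw [← hk]
    exact hf.2.2 z (hNZ ▸ hz)

private lemma Goodl_ex (C : Chain A) (huncount : ¬ Countable A)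
    (htor : ∀ m : ℕ, 1 ≤ m → (Tor A m).Countable) :
    ∀ k f, (∀ j, j < k → Goodl C j f) → ∃ x, Goodl C k (Function.update f k x) := by
  intro k f hprev
  set a : ℕ → A := fun n => (f n).1 with ha
  set i : ℕ → ℕ := fun n => (f n).2 with hi
  obtain ⟨O, hO, hOmul⟩ := small_zsmul (Pickl_nhds C a i k) ((k+1) * Nat.factorial k)
  -- the set of elements with some multiple in Hset a k is countable
  set bad : Set A := {c : A | ∃ m : ℕ, 1 ≤ m ∧ m • c ∈ Hset a k} with hbad
  have hbadc : bad.Countable := by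
    have hcover : bad ⊆ ⋃ m ∈ {m : ℕ | 1 ≤ m}, ⋃ h ∈ Hset a k, {c : A | m • c = h} := by
      rintro c ⟨m, hm1, hm2⟩
      exact Set.mem_biUnion hm1 (Set.mem_biUnion hm2 rfl)
    refine Set.Countable.mono hcover ?_
    refine Set.Countable.biUnion (Set.to_countable _) (fun m hm => ?_)
    refine Set.Countable.biUnion (Hset_countable a k) (fun h _ => ?_)
    by_cases hne : {c : A | m • c = h}.Nonempty
    · obtain ⟨c₀, hc₀⟩ := hne
      have hsub : {c : A | m • c = h} ⊆ (fun z => c₀ + z) '' Tor A m := by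
        intro c hc
        refine ⟨c - c₀, ?_, by show c₀ + (c - c₀) = c; rw [add_comm, sub_add_cancel]⟩
        show m • (c - c₀) = 0
        rw [nsmul_sub', hc, hc₀, sub_self]
      exact Set.Countable.mono hsub ((htor m hm).image _)
    · rw [Set.not_nonempty_iff_eq_empty] at hne
      rw [hne]; exact Set.countable_empty
  have huncO : ¬ ((Set.univ : Set A) ∩ O).Countable := by
    refine uncount_inter (fun x _ y _ => Set.mem_univ _) ?_ hO
    exact fun h => huncount (countable_univ_iff.mp h)
  obtain ⟨b, hbO, hbbad⟩ : ∃ b, b ∈ O ∧ b ∉ bad := by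
    by_contra hcon
    push_neg at hcon
    exact huncO (Set.Countable.mono (fun z hz => hcon z hz.2) hbadc)
  -- freeness of b
  have hbfree : ∀ m : ℤ, m ≠ 0 → m • b ∉ Hset a k := by
    intro m hm hmem
    refine hbbad ⟨m.natAbs, by omega, ?_⟩
    show (m.natAbs : ℕ) • b ∈ Hset a k
    rcases le_or_gt 0 m with h0 | h0
    · have : (m.natAbs : ℕ) • b = m • b := by
        rw [← natCast_zsmul]
        congr 1
        omega
      rw [this]; exact hmem
    · have : (m.natAbs : ℕ) • b = -(m • b) := by
        rw [← natCast_zsmul, ← neg_zsmul]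
        congr 1
        omega
      rw [this]; exact neg_mem_Hset a k hmem
  -- the updated sequence
  set a' : ℕ → A := Function.update a k b with ha'
  have ha'eq : ∀ j, j ≠ k → a' j = a j := fun j hj => by
    rw [ha', Function.update_of_ne hj]
  have ha'k : a' k = b := by rw [ha', Function.update_self]
  -- all nonzero combinations are nonzero, so we can separate
  have hfree' : ∀ j, j ≤ k → ∀ m : ℤ, m ≠ 0 → m • a' j ∉ Hset a' j := by
    intro j hj m hm
    rcases eq_or_lt_of_le hj with rfl | hjk
    · rw [ha'k, Hset_congr j (fun l hl => ha'eq l (by omega))]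
      exact hbfree m hm
    · rw [ha'eq j (by omega), Hset_congr j (fun l hl => ha'eq l (by omega))]
      exact (hprev j hjk).1 m hm
  obtain ⟨iK, hiK⟩ := C.exists_sep (NZl a' k) (NZl_finite a' k) (NZl_ne_zero a' k hfree')
  set g : ℕ → A × ℕ := Function.update f k (b, iK) with hgdef
  have hg1 : (fun n => (g n).1) = a' := by
    funext n
    rcases eq_or_ne n k with rfl | hn
    · show (Function.update f n (b, iK) n).1 = a' n
      rw [Function.update_self, ha'k]
    · show (Function.update f k (b, iK) n).1 = a' n
      rw [Function.update_of_ne hn, ha'eq n hn]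
  have hg2 : ∀ j, j ≠ k → (g j).2 = i j := fun j hj => by
    show (Function.update f k (b, iK) j).2 = i j
    rw [Function.update_of_ne hj]
  have hgk : g k = (b, iK) := by
    show Function.update f k (b, iK) k = (b, iK)
    rw [Function.update_self]
  refine ⟨(b, iK), ?_, ?_, ?_⟩
  · intro m hm
    show m • (g k).1 ∉ Hset (fun n => (g n).1) k
    rw [hg1, hgk]
    exact ha'k ▸ hfree' k le_rfl m hm
  · intro m hm
    show m • (g k).1 ∈ Pickl C (fun n => (g n).1) (fun n => (g n).2) k
    have hpick : Pickl C (fun n => (g n).1) (fun n => (g n).2) k = Pickl C a i k :=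
      Pickl_congr C k
        (fun j hj => by rw [congrFun hg1 j, ha'eq j (by omega)])
        (fun j hj => hg2 j (by omega))
    rw [hpick, hgk]
    exact hOmul b hbO m hm
  · intro z hz
    show z ∉ C.V ((g k).2) + C.V ((g k).2) + C.V ((g k).2)
    rw [hgk]
    refine hiK z ?_
    rw [hg1] at hz
    exact hz

/-- Main case-1 lemma: `ℓ¹(ℤ)` maps in continuously and injectively. -/
lemma case_one (huncount : ¬ Countable A)
    (htor : ∀ m : ℕ, 1 ≤ m → (Tor A m).Countable) :
    ∃ f : {x : ℕ → ℤ // MemL1Z x} → A,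
      (∀ (x y : {x : ℕ → ℤ // MemL1Z x}) (h : MemL1Z (x.1 + y.1)),
        f ⟨x.1 + y.1, h⟩ = f x + f y) ∧
      Function.Injective f ∧
      (∀ x : {x : ℕ → ℤ // MemL1Z x}, ∀ U ∈ 𝓝 (f x),
        ∃ δ > 0, ∀ y : {x : ℕ → ℤ // MemL1Z x},
          l1NormZ (y.1 - x.1) < δ → f y ∈ U) := by
  classical
  obtain ⟨C⟩ := exists_chain (A := A)
  haveI : Inhabited (A × ℕ) := ⟨(0, 0)⟩
  obtain ⟨g, hg⟩ := seq_choice (Goodl C) (Goodl_ex C huncount htor) (Goodl_dep C)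
  set a : ℕ → A := fun n => (g n).1 with ha
  set i : ℕ → ℕ := fun n => (g n).2 with hi
  have hfree : ∀ k, ∀ m : ℤ, m ≠ 0 → m • a k ∉ Hset a k := fun k => (hg k).1
  have hsmall : ∀ k, ∀ m : ℤ, m.natAbs ≤ (k+1) * Nat.factorial k →
      m • a k ∈ Pickl C a i k := fun k => (hg k).2.1
  have hsepC : ∀ k, ∀ z ∈ NZl a k,
      z ∉ C.V (i k) + C.V (i k) + C.V (i k) := fun k => (hg k).2.2
  -- bounds for summable sequences
  have hbound : ∀ x : ℕ → ℤ, MemL1Z x →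
      ∃ b : ℕ, 1 ≤ b ∧ ∀ j, (x j).natAbs ≤ b * Nat.factorial j := by
    intro x hx
    have h0 : Tendsto (fun k => (|x k| : ℝ) / (Nat.factorial k : ℝ)) atTop (𝓝 0) :=
      hx.tendsto_atTop_zero
    have hIic : Iic (1:ℝ) ∈ 𝓝 (0:ℝ) := Iic_mem_nhds one_pos
    obtain ⟨N, hN⟩ := Filter.eventually_atTop.mp (h0 hIic)
    refine ⟨1 + (Finset.range N).sup (fun k => (x k).natAbs), by omega, fun j => ?_⟩
    set B := 1 + (Finset.range N).sup (fun k => (x k).natAbs) with hB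
    rcases lt_or_ge j N with hj | hj
    · have h1 : (x j).natAbs ≤ (Finset.range N).sup (fun k => (x k).natAbs) :=
        Finset.le_sup (f := fun k => (x k).natAbs) (Finset.mem_range.mpr hj)
      have h2 : 1 ≤ Nat.factorial j := Nat.one_le_iff_ne_zero.mpr j.factorial_pos.ne'
      calc (x j).natAbs ≤ B := by omega
      _ = B * 1 := (mul_one B).symm
      _ ≤ B * Nat.factorial j := Nat.mul_le_mul_left B h2
    · have h3 : (|x j| : ℝ) / (Nat.factorial j : ℝ) ≤ 1 := hN j hj
      have hfp : (0:ℝ) < (Nat.factorial j : ℝ) := by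
        exact_mod_cast j.factorial_pos
      rw [div_le_one hfp] at h3
      have h5 : (x j).natAbs ≤ Nat.factorial j := by
        have h4 : ((x j).natAbs : ℝ) ≤ (Nat.factorial j : ℝ) := by
          rw [Nat.cast_natAbs, Int.cast_abs]
          exact h3
        exact_mod_cast h4
      calc (x j).natAbs ≤ Nat.factorial j := h5
      _ = 1 * Nat.factorial j := (one_mul _).symm
      _ ≤ B * Nat.factorial j := Nat.mul_le_mul_right _ (by omega)
  -- partial sums
  set Sl : (ℕ → ℤ) → ℕ → A := fun x K => ∑ j ∈ Finset.range K, x j • a j with hSl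
  have hSmem : ∀ (x : ℕ → ℤ) (b K : ℕ), (∀ j, (x j).natAbs ≤ b * Nat.factorial j) →
      b ≤ K → Sl x K ∈ PSl a K := by
    intro x b K hb hbK
    refine ⟨fun j => x (j : ℕ), fun j => ?_, Fin.sum_univ_eq_sum_range (fun j => x j • a j) K⟩
    have h1 : (x (j:ℕ)).natAbs ≤ K * Nat.factorial (j:ℕ) :=
      le_trans (hb (j:ℕ)) (Nat.mul_le_mul_right _ hbK)
    rw [Int.abs_eq_natAbs]
    exact_mod_cast h1
  have hterm : ∀ (x : ℕ → ℤ) (b k : ℕ), (∀ j, (x j).natAbs ≤ b * Nat.factorial j) →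
      b ≤ k + 1 → x k • a k ∈ Pickl C a i k := by
    intro x b k hb hbk
    refine hsmall k (x k) ?_
    exact le_trans (hb k) (Nat.mul_le_mul_right _ hbk)
  -- convergence
  have hconv : ∀ x : ℕ → ℤ, MemL1Z x → ∃ L, Tendsto (Sl x) atTop (𝓝 L) := by
    intro x hx
    obtain ⟨b, hb1, hb⟩ := hbound x hx
    have hc : CauchySeq (fun n => Sl x (n + b)) := by
      refine cauchySeq_of_dist_le_of_summable (fun n => (1/2:ℝ)^n) (fun n => ?_)
        summable_geometric_two
      have hstep : Sl x (n + b + 1) = Sl x (n + b) + x (n + b) • a (n + b) :=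
        Finset.sum_range_succ _ _
      show dist (Sl x (n + b)) (Sl x (n.succ + b)) ≤ (1/2:ℝ)^n
      rw [Nat.succ_add, hstep, dist_comm]
      refine le_trans (le_of_lt (Pickl_dist C a i (n+b)
        (hSmem x b (n+b) hb (by omega)) (hterm x b (n+b) hb (by omega)))) ?_
      exact pow_le_pow_of_le_one (by norm_num) (by norm_num) (by omega)
    obtain ⟨L, hL⟩ := cauchySeq_tendsto_of_complete hc
    exact ⟨L, (tendsto_add_atTop_iff_nat b).mp hL⟩
  set fl : (ℕ → ℤ) → A := fun x =>
    if h : ∃ L, Tendsto (Sl x) atTop (𝓝 L) then Classical.choose h else 0 with hfl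
  have hflt : ∀ x : ℕ → ℤ, MemL1Z x → Tendsto (Sl x) atTop (𝓝 (fl x)) := by
    intro x hx
    rw [hfl]
    simp only [dif_pos (hconv x hx)]
    exact Classical.choose_spec (hconv x hx)
  -- additivity of partial sums
  have hSladd : ∀ (u v : ℕ → ℤ) (K : ℕ), Sl (u + v) K = Sl u K + Sl v K := by
    intro u v K
    rw [hSl, ← Finset.sum_add_distrib]
    exact Finset.sum_congr rfl (fun j _ => by show (u j + v j) • a j = _; rw [add_zsmul])
  have hSlsub : ∀ (u v : ℕ → ℤ) (K : ℕ), Sl (u - v) K = Sl u K - Sl v K := by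
    intro u v K
    rw [hSl, ← Finset.sum_sub_distrib]
    exact Finset.sum_congr rfl (fun j _ => by show (u j - v j) • a j = _; rw [sub_zsmul, sub_eq_add_neg])
  have hadd : ∀ (u v : ℕ → ℤ), MemL1Z u → MemL1Z v → MemL1Z (u + v) →
      fl (u + v) = fl u + fl v := by
    intro u v hu hv huv
    refine tendsto_nhds_unique (hflt _ huv) ?_
    exact Filter.Tendsto.congr (fun K => (hSladd u v K).symm) ((hflt u hu).add (hflt v hv))
  have hsubL1 : ∀ (u v : ℕ → ℤ), MemL1Z u → MemL1Z v → MemL1Z (u - v) := by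
    intro u v hu hv
    refine Summable.of_nonneg_of_le (fun k => by positivity) (fun k => ?_) (hu.add hv)
    show (|(u - v) k| : ℝ) / (Nat.factorial k : ℝ) ≤ _
    have hfp : (0:ℝ) < (Nat.factorial k : ℝ) := by exact_mod_cast k.factorial_pos
    rw [← add_div]
    refine (div_le_div_iff_of_pos_right hfp).mpr ?_
    rw [Pi.sub_apply]
    push_cast
    exact abs_sub _ _
  -- injectivity core
  have hnonzero : ∀ x : ℕ → ℤ, MemL1Z x → x ≠ 0 → fl x ≠ 0 := by
    intro x hx hxne
    have hex : ∃ j, x j ≠ 0 := by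
      by_contra hc
      push_neg at hc
      exact hxne (funext hc)
    set n := Nat.find hex with hn
    have hxn : x n ≠ 0 := Nat.find_spec hex
    have hxz : ∀ j, j < n → x j = 0 := fun j hj => of_not_not (Nat.find_min hex hj)
    obtain ⟨b, hb1, hb⟩ := hbound x hx
    set k₀ := max n b with hk₀
    have hbk₀ : b ≤ k₀ := le_max_right _ _
    have hnk₀ : n ≤ k₀ := le_max_left _ _
    -- terms beyond k₀ are small
    have htermV : ∀ j, k₀ < j → x j • a j ∈ C.V (i k₀ + (j - k₀)) := by
      intro j hj
      refine Pickl_subset_Vi C a i j k₀ hj ?_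
      exact hterm x b j hb (by omega)
    -- tail estimate
    have htailm : fl x - Sl x (k₀+3) ∈ C.V (i k₀) := by
      have hlim : Tendsto (fun L => Sl x L - Sl x (k₀+3)) atTop (𝓝 (fl x - Sl x (k₀+3))) :=
        (hflt x hx).sub_const _
      refine C.mem_of_tendsto (n := i k₀) hlim ?_
      filter_upwards [Filter.eventually_ge_atTop (k₀+3)] with L hL
      have hdiff : Sl x L - Sl x (k₀+3) = ∑ j ∈ Finset.Ico (k₀+3) L, x j • a j := by
        rw [hSl, Finset.sum_Ico_eq_sub _ hL]
      rw [hdiff]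
      have hsum : (∑ j ∈ Finset.Ico (k₀+3) L, x j • a j) ∈ C.V (i k₀ + 2) := by
        refine C.sum_mem' _ (i k₀ + 2) (k₀+3) L (fun j hj1 hj2 => ?_)
        have harith : i k₀ + 2 + 1 + (j - (k₀+3)) = i k₀ + (j - k₀) := by omega
        rw [harith]
        exact htermV j (by omega)
      exact C.anti_le (by omega) hsum
    -- the head is separated
    have hCc : Sl x (k₀+1) ∈ NZl a k₀ := by
      refine ⟨fun j => x (j:ℕ), ⟨fun j => ?_, ?_⟩,
        Fin.sum_univ_eq_sum_range (fun j => x j • a j) (k₀+1)⟩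
      · have h1 : (x (j:ℕ)).natAbs ≤ k₀ * Nat.factorial (j:ℕ) :=
          le_trans (hb (j:ℕ)) (Nat.mul_le_mul_right _ hbk₀)
        rw [Int.abs_eq_natAbs]
        exact_mod_cast h1
      · intro hz
        exact hxn (by simpa using congrFun hz ⟨n, by omega⟩)
    have hlow : Sl x (k₀+3) ∉ C.V (i k₀) + C.V (i k₀) := by
      intro hmem
      have hsplit : Sl x (k₀+3) = Sl x (k₀+1) + ∑ j ∈ Finset.Ico (k₀+1) (k₀+3), x j • a j := by
        show (∑ j ∈ Finset.range (k₀+3), x j • a j)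
          = (∑ j ∈ Finset.range (k₀+1), x j • a j) + ∑ j ∈ Finset.Ico (k₀+1) (k₀+3), x j • a j
        exact (Finset.sum_range_add_sum_Ico _ (by omega)).symm
      have hP : (∑ j ∈ Finset.Ico (k₀+1) (k₀+3), x j • a j) ∈ C.V (i k₀) := by
        refine C.sum_mem' _ (i k₀) (k₀+1) (k₀+3) (fun j hj1 hj2 => ?_)
        have harith : i k₀ + 1 + (j - (k₀+1)) = i k₀ + (j - k₀) := by omega
        rw [harith]
        exact htermV j (by omega)
      have : Sl x (k₀+1) ∈ C.V (i k₀) + C.V (i k₀) + C.V (i k₀) := by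
        have heq : Sl x (k₀+1) = Sl x (k₀+3) + (-(∑ j ∈ Finset.Ico (k₀+1) (k₀+3), x j • a j)) := by
          rw [hsplit]; abel
        rw [heq]
        exact Set.add_mem_add hmem (C.neg_mem _ _ hP)
      exact hsepC k₀ _ hCc this
    intro h0
    apply hlow
    have h2 : Sl x (k₀+3) ∈ C.V (i k₀) := by
      have h3 := C.neg_mem _ _ htailm
      rw [h0, zero_sub, neg_neg] at h3
      exact h3
    exact ⟨Sl x (k₀+3), h2, 0, C.zero_mem _, add_zero _⟩
  -- continuity core
  have hVsmall : ∀ (j₀ : ℕ) (z : ℕ → ℤ), MemL1Z z →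
      l1NormZ z < 1/((Nat.factorial (j₀+3) : ℕ) : ℝ) → fl z ∈ C.V j₀ := by
    intro j₀ z hz hnorm
    have hpt : ∀ k, (|z k| : ℝ)/(Nat.factorial k : ℝ) ≤ l1NormZ z := by
      intro k
      exact Summable.le_tsum hz k (fun j _ => by positivity)
    have hfp : ∀ k : ℕ, (0:ℝ) < ((Nat.factorial k : ℕ) : ℝ) :=
      fun k => by exact_mod_cast k.factorial_pos
    have hlt : ∀ k, (|z k| : ℝ) < ((Nat.factorial k : ℕ) : ℝ) / ((Nat.factorial (j₀+3) : ℕ) : ℝ) := by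
      intro k
      have h1 : (|z k| : ℝ)/(Nat.factorial k : ℝ) < 1/((Nat.factorial (j₀+3) : ℕ) : ℝ) :=
        lt_of_le_of_lt (hpt k) hnorm
      rw [div_lt_div_iff₀ (hfp k) (hfp (j₀+3))] at h1
      rw [lt_div_iff₀ (hfp (j₀+3))]
      linarith
    have hzero : ∀ k, k < j₀ + 3 → z k = 0 := by
      intro k hk
      have h2 : (Nat.factorial k : ℕ) < Nat.factorial (j₀+3) := by
        calc Nat.factorial k ≤ Nat.factorial (j₀+2) := Nat.factorial_le (by omega)
        _ < Nat.factorial (j₀+3) := by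
            rw [Nat.factorial_succ]
            exact (lt_mul_iff_one_lt_left (Nat.factorial_pos (j₀+2))).mpr (by omega)
      have h3 : ((Nat.factorial k : ℕ) : ℝ) / ((Nat.factorial (j₀+3) : ℕ) : ℝ) < 1 := by
        rw [div_lt_one (hfp (j₀+3))]
        exact_mod_cast h2
      have h4 : (|z k| : ℝ) < 1 := lt_trans (hlt k) h3
      have h5 : ((z k).natAbs : ℝ) < 1 := by
        rw [Nat.cast_natAbs, Int.cast_abs]
        exact h4
      have h6 : (z k).natAbs = 0 := by
        have : (z k).natAbs < 1 := by exact_mod_cast h5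
        omega
      exact Int.natAbs_eq_zero.mp h6
    have hbnd : ∀ k, (z k).natAbs ≤ (k+1) * Nat.factorial k := by
      intro k
      have h2 : ((Nat.factorial k : ℕ) : ℝ) / ((Nat.factorial (j₀+3) : ℕ) : ℝ)
          ≤ ((Nat.factorial k : ℕ) : ℝ) := by
        refine div_le_self (le_of_lt (hfp k)) ?_
        exact_mod_cast Nat.one_le_iff_ne_zero.mpr (Nat.factorial_pos (j₀+3)).ne'
      have h4 : ((z k).natAbs : ℝ) < ((Nat.factorial k : ℕ) : ℝ) := by
        rw [Nat.cast_natAbs, Int.cast_abs]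
        exact lt_of_lt_of_le (hlt k) h2
      have h5 : (z k).natAbs ≤ Nat.factorial k := by
        have : (z k).natAbs < Nat.factorial k := by exact_mod_cast h4
        omega
      calc (z k).natAbs ≤ Nat.factorial k := h5
      _ = 1 * Nat.factorial k := (one_mul _).symm
      _ ≤ (k+1) * Nat.factorial k := Nat.mul_le_mul_right _ (by omega)
    refine C.mem_of_tendsto (n := j₀) (hflt z hz) ?_
    filter_upwards [Filter.eventually_ge_atTop (j₀+3)] with L hL
    have heq : Sl z L = ∑ j ∈ Finset.Ico (j₀+3) L, z j • a j := by
      show (∑ j ∈ Finset.range L, z j • a j) = _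
      rw [Finset.range_eq_Ico]
      refine (Finset.sum_subset (Finset.Ico_subset_Ico (by omega) le_rfl) ?_).symm
      intro j hj1 hj2
      simp only [Finset.mem_Ico] at hj1 hj2
      rw [hzero j (by omega), zero_zsmul]
    rw [heq]
    have hsum : (∑ j ∈ Finset.Ico (j₀+3) L, z j • a j) ∈ C.V (j₀ + 2) := by
      refine C.sum_mem' _ (j₀+2) (j₀+3) L (fun j hj1 hj2 => ?_)
      have harith : j₀ + 2 + 1 + (j - (j₀+3)) = j := by omega
      rw [harith]
      exact Pickl_subset_V C a i j (hsmall j (z j) (hbnd j))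
    exact C.anti_le (by omega) hsum
  -- assembly
  refine ⟨fun x => fl x.1, ?_, ?_, ?_⟩
  · intro x y h
    exact hadd x.1 y.1 x.2 y.2 h
  · intro x y hxy
    by_contra hne
    have hsubm : MemL1Z (x.1 - y.1) := hsubL1 x.1 y.1 x.2 y.2
    have hzne : x.1 - y.1 ≠ 0 := sub_ne_zero.mpr (fun hh => hne (Subtype.ext hh))
    refine hnonzero _ hsubm hzne ?_
    have h1 : Tendsto (Sl (x.1 - y.1)) atTop (𝓝 (fl x.1 - fl y.1)) :=
      Filter.Tendsto.congr (fun K => (hSlsub x.1 y.1 K).symm)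
        ((hflt _ x.2).sub (hflt _ y.2))
    have h2 := tendsto_nhds_unique (hflt _ hsubm) h1
    have hxy' : fl x.1 = fl y.1 := hxy
    rw [h2, hxy', sub_self]
  · intro x U hU
    have hU0 : {v : A | fl x.1 + v ∈ U} ∈ 𝓝 (0:A) := by
      have hc : Continuous (fun v : A => fl x.1 + v) := continuous_const.add continuous_id
      refine hc.continuousAt.preimage_mem_nhds ?_
      simpa using hU
    obtain ⟨j₀, hj₀⟩ := C.basis _ hU0
    refine ⟨1/((Nat.factorial (j₀+3) : ℕ) : ℝ), by positivity, fun y hnorm => ?_⟩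
    set z : ℕ → ℤ := y.1 - x.1 with hz
    have hzm : MemL1Z z := hsubL1 y.1 x.1 y.2 x.2
    have hfz : fl z ∈ C.V j₀ := hVsmall j₀ z hzm hnorm
    have hyx : fl y.1 = fl x.1 + fl z := by
      refine tendsto_nhds_unique (hflt _ y.2) ?_
      refine Filter.Tendsto.congr (fun K => ?_) ((hflt _ x.2).add (hflt _ hzm))
      rw [← hSladd]
      congr 1
      rw [hz]
      abel
    show fl y.1 ∈ U
    rw [hyx]
    exact hj₀ hfz

end CaseOne

end S17


theorem stmt_17 (A : Type*) [AddCommGroup A] [TopologicalSpace A]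
    [IsTopologicalAddGroup A] [PolishSpace A] (huncount : ¬ Countable A) :
    -- either ℓ¹(ℤ) embeds into A by a continuous injective homomorphism:
    (∃ f : {x : ℕ → ℤ // MemL1Z x} → A,
      (∀ (x y : {x : ℕ → ℤ // MemL1Z x}) (h : MemL1Z (x.1 + y.1)),
        f ⟨x.1 + y.1, h⟩ = f x + f y) ∧
      Function.Injective f ∧
      (∀ x : {x : ℕ → ℤ // MemL1Z x}, ∀ U ∈ nhds (f x),
        ∃ δ > 0, ∀ y : {x : ℕ → ℤ // MemL1Z x},
          l1NormZ (y.1 - x.1) < δ → f y ∈ U)) ∨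
    -- or (ℤ/pℤ)^ℕ embeds into A for some prime p:
    (∃ p : ℕ, p.Prime ∧
      ∃ f : (ℕ → ZMod p) →+ A, Continuous f ∧ Function.Injective f) := by
    classical
  letI := TopologicalSpace.upgradeIsCompletelyMetrizable A
  by_cases hc : ∀ m : ℕ, 1 ≤ m → (S17.Tor A m).Countable
  · exact Or.inl (S17.case_one huncount hc)
  · push_neg at hc
    obtain ⟨m, hm1, hmc⟩ := hc
    obtain ⟨p, hp, hpc⟩ := S17.tor_aux m hm1 hmc
    exact Or.inr ⟨p, hp, S17.case_two hp hpc⟩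
end
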